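/- arXiv:2406.07554 — 4 statements merged into one kernel-verified Lean document; each statement's English description precedes it below -/
import Mathlib

section
/- Let g be a centerless Lie 2-algebra with standard maximal torus t, Cartan subalgebra h = t ⊕ n, and root space decomposition g = t ⊕ n ⊕ ⊕_{ξ∈Δ} g_ξ. If dim(g_ξ) = 1 for every t-root ξ ∈ Δ, then I := n ⊕ ⊕_{ξ∈Δ} g_ξ is an ideal of g. -/
/-- A 2-map on a Lie algebra over the field `F` (char 2 version of a restricted structure):
`(c • x)^[2] = c^2 • x^[2]`, `ad (x^[2]) = (ad x) ∘ (ad x)` and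
`(x+y)^[2] = x^[2] + y^[2] + [x,y]`. -/
structure IsTwoMap (F : Type*) [Field F] {g : Type*} [LieRing g] [LieAlgebra F g]
    (p : g → g) : Prop where
  smul_pow : ∀ (c : F) (x : g), p (c • x) = (c ^ 2) • p x
  ad_pow : ∀ x y : g, ⁅p x, y⁆ = ⁅x, ⁅x, y⁆⁆
  add_pow : ∀ x y : g, p (x + y) = p x + p y + ⁅x, y⁆

/-- An element is 2-nilpotent if some iterate of the 2-map annihilates it. -/
def IsTwoNilpotent {g : Type*} [Zero g] (p : g → g) (x : g) : Prop :=
  ∃ k : ℕ, p^[k] x = 0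

/-- A torus of a Lie 2-algebra: a Lie subalgebra closed under the 2-map on which the
2-map is invertible (bijective). -/
def IsTorus (F : Type*) [Field F] {g : Type*} [LieRing g] [LieAlgebra F g]
    (p : g → g) (t : LieSubalgebra F g) : Prop :=
  (∀ x ∈ t, p x ∈ t) ∧ Set.BijOn p (t : Set g) (t : Set g)

/-- A maximal torus of a Lie 2-algebra. -/
def IsMaxTorus (F : Type*) [Field F] {g : Type*} [LieRing g] [LieAlgebra F g]
    (p : g → g) (t : LieSubalgebra F g) : Prop :=
  IsTorus F p t ∧ ∀ s : LieSubalgebra F g, IsTorus F p s → t ≤ s → s = t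

/-- The weight (root) space of a linear functional `lam` on a torus `t`:
`g_lam = {v | [x, v] = lam x • v for all x ∈ t}`. -/
def rootSpace {F : Type*} [Field F] {g : Type*} [LieRing g] [LieAlgebra F g]
    (t : LieSubalgebra F g) (lam : Module.Dual F t) : Submodule F g where
  carrier := {v | ∀ x : t, ⁅(x : g), v⁆ = lam x • v}
  add_mem' := by
    intro a b ha hb x
    rw [lie_add, ha x, hb x, smul_add]
  zero_mem' := by
    intro x
    rw [lie_zero, smul_zero]
  smul_mem' := by
    intro c v hv x
    rw [lie_smul, hv x, smul_comm]

/-- The set of `t`-roots: nonzero functionals with nonzero root space. -/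
def rootSet {F : Type*} [Field F] {g : Type*} [LieRing g] [LieAlgebra F g]
    (t : LieSubalgebra F g) : Set (Module.Dual F t) :=
  {lam | lam ≠ 0 ∧ rootSpace t lam ≠ ⊥}

/-- The subspace `N(σ, δ) = {x ∈ g_σ : [x, g_σ] ⊆ n and [[x, g_δ], g_{σ+δ}] ⊆ n}`,
given as `Nspace n g_σ g_δ g_{σ+δ}`. -/
def Nspace {F : Type*} [Field F] {g : Type*} [LieRing g] [LieAlgebra F g]
    (n gs gd gsd : Submodule F g) : Submodule F g where
  carrier := {x | x ∈ gs ∧ (∀ y ∈ gs, ⁅x, y⁆ ∈ n) ∧ ∀ z ∈ gd, ∀ w ∈ gsd, ⁅⁅x, z⁆, w⁆ ∈ n}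
  add_mem' := by
    intro a b ha hb
    obtain ⟨ha1, ha2, ha3⟩ := ha
    obtain ⟨hb1, hb2, hb3⟩ := hb
    refine ⟨gs.add_mem ha1 hb1, fun y hy => ?_, fun z hz w hw => ?_⟩
    · rw [add_lie]
      exact n.add_mem (ha2 y hy) (hb2 y hy)
    · rw [add_lie, add_lie]
      exact n.add_mem (ha3 z hz w hw) (hb3 z hz w hw)
  zero_mem' := by
    refine ⟨gs.zero_mem, fun y hy => ?_, fun z hz w hw => ?_⟩
    · rw [zero_lie]; exact n.zero_mem
    · rw [zero_lie, zero_lie]; exact n.zero_mem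
  smul_mem' := by
    intro c x hx
    obtain ⟨h1, h2, h3⟩ := hx
    refine ⟨gs.smul_mem c h1, fun y hy => ?_, fun z hz w hw => ?_⟩
    · rw [smul_lie]; exact n.smul_mem c (h2 y hy)
    · rw [smul_lie, smul_lie]; exact n.smul_mem c (h3 z hz w hw)


section AuxLemmas

open Polynomial

/-- Membership in `rootSpace`. -/
lemma mem_rootSpace_iff {F : Type*} [Field F] {g : Type*} [LieRing g] [LieAlgebra F g]
    {t : LieSubalgebra F g} {lam : Module.Dual F t} {v : g} :
    v ∈ rootSpace t lam ↔ ∀ x : t, ⁅(x : g), v⁆ = lam x • v := Iff.rfl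

lemma lie_mem_rootSpace_add {F : Type*} [Field F] {g : Type*} [LieRing g] [LieAlgebra F g]
    {t : LieSubalgebra F g} {xi eta : Module.Dual F t} {x y : g}
    (hx : x ∈ rootSpace t xi) (hy : y ∈ rootSpace t eta) :
    ⁅x, y⁆ ∈ rootSpace t (xi + eta) := by
  intro s
  rw [leibniz_lie, hx s, hy s, smul_lie, lie_smul, LinearMap.add_apply, add_smul]

/-- An endomorphism annihilated by a separable polynomial has generalized eigenspaces equal to
eigenspaces. -/
lemma maxGen_eq_eigen_of_separable {F M : Type*} [Field F] [AddCommGroup M] [Module F M]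
    (A : Module.End F M) {f : F[X]} (hsep : f.Separable) (hf : Polynomial.aeval A f = 0)
    (mu : F) : A.maxGenEigenspace mu = A.eigenspace mu :=
  ((Module.End.isSemisimple_of_squarefree_aeval_eq_zero hsep.squarefree
    hf).isFinitelySemisimple).maxGenEigenspace_eq_eigenspace mu

end AuxLemmas

/-- if all root spaces are one-dimensional, then `n ⊕ ⊕_{ξ∈Δ} g_ξ`
is an ideal of `g`. -/
theorem statement2
    {F : Type*} [Field F] [IsAlgClosed F] [CharP F 2]
    {g : Type*} [LieRing g] [LieAlgebra F g] [FiniteDimensional F g]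
    (p : g → g) (hp : IsTwoMap F p)
    (hcenter : LieAlgebra.center F g = ⊥)
    (t : LieSubalgebra F g) (hmax : IsMaxTorus F p t)
    (n : Submodule F g)
    (hn : ∀ x : g, x ∈ n ↔ x ∈ rootSpace t 0 ∧ IsTwoNilpotent p x)
    (hstd : ∀ x ∈ rootSpace t 0, ∀ y ∈ n, ⁅x, y⁆ ∈ n)
    (hdecomp : rootSpace t 0 = t.toSubmodule ⊔ n)
    (hdisj : Disjoint t.toSubmodule n)
    (hone : ∀ ξ ∈ rootSet t, Module.finrank F (rootSpace t ξ) = 1) :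
    ∀ x y : g, y ∈ n ⊔ (⨆ ξ ∈ rootSet t, rootSpace t ξ) →
      ⁅x, y⁆ ∈ n ⊔ (⨆ ξ ∈ rootSet t, rootSpace t ξ) := by
  classical
  set I : Submodule F g := n ⊔ (⨆ ξ ∈ rootSet t, rootSpace t ξ) with hIdef
  have htle : t.toSubmodule ≤ rootSpace t 0 := by rw [hdecomp]; exact le_sup_left
  have hnle : n ≤ rootSpace t 0 := by rw [hdecomp]; exact le_sup_right
  have habel : ∀ x y : t, ⁅(x : g), (y : g)⁆ = 0 := by
    intro x y
    have hy : (y : g) ∈ rootSpace t 0 := htle y.2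
    simpa using hy x
  have hrootle : ∀ ξ ∈ rootSet t, rootSpace t ξ ≤ I :=
    fun ξ hξ => le_sup_of_le_right (le_iSup₂ (f := fun ξ _ => rootSpace t ξ) ξ hξ)
  have hnI : n ≤ I := le_sup_left
  -- one-dimensional root spaces have trivial self-bracket
  have hsq : ∀ ξ ∈ rootSet t, ∀ x ∈ rootSpace t ξ, ∀ y ∈ rootSpace t ξ, ⁅x, y⁆ = (0 : g) := by
    intro ξ hξ x hx y hy
    obtain ⟨v, hv0, hv⟩ := finrank_eq_one_iff'.mp (hone ξ hξ)
    obtain ⟨a, ha⟩ := hv ⟨x, hx⟩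
    obtain ⟨b, hb⟩ := hv ⟨y, hy⟩
    have hax : a • (v : g) = x := by
      have := congrArg (Subtype.val) ha; simpa using this
    have hbx : b • (v : g) = y := by
      have := congrArg (Subtype.val) hb; simpa using this
    rw [← hax, ← hbx, smul_lie, lie_smul, lie_self, smul_zero, smul_zero]
  -- criterion for bracketing into I
  have hcrit : ∀ x : g, (∀ y ∈ n, ⁅x, y⁆ ∈ I) →
      (∀ ξ ∈ rootSet t, ∀ y ∈ rootSpace t ξ, ⁅x, y⁆ ∈ I) → ∀ y ∈ I, ⁅x, y⁆ ∈ I := by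
    intro x h1 h2 y hy
    have hle : I ≤ Submodule.comap (LieAlgebra.ad F g x) I := by
      refine sup_le ?_ (iSup₂_le fun ξ hξ => ?_)
      · intro z hz
        simpa [Submodule.mem_comap, LieAlgebra.ad_apply] using h1 z hz
      · intro z hz
        simpa [Submodule.mem_comap, LieAlgebra.ad_apply] using h2 ξ hξ z hz
    simpa [Submodule.mem_comap, LieAlgebra.ad_apply] using hle hy
  -- g₀ brackets I into I
  have hG0 : ∀ x ∈ rootSpace t 0, ∀ y ∈ I, ⁅x, y⁆ ∈ I := by
    intro x hx
    refine hcrit x (fun y hy => hnI (hstd x hx y hy)) ?_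
    intro ξ hξ y hy
    have h := lie_mem_rootSpace_add hx hy
    rw [zero_add] at h
    exact hrootle ξ hξ h
  -- root spaces bracket I into I
  have hGξ : ∀ ξ ∈ rootSet t, ∀ x ∈ rootSpace t ξ, ∀ y ∈ I, ⁅x, y⁆ ∈ I := by
    intro ξ hξ x hx
    refine hcrit x ?_ ?_
    · intro y hy
      have hy0 : y ∈ rootSpace t 0 := hnle hy
      have h1 : ⁅y, x⁆ ∈ rootSpace t ξ := by
        have := lie_mem_rootSpace_add hy0 hx; rwa [zero_add] at this
      have h2 : ⁅x, y⁆ ∈ rootSpace t ξ := by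
        rw [← lie_skew]; exact (rootSpace t ξ).neg_mem h1
      exact hrootle ξ hξ h2
    · intro η hη y hy
      by_cases hzero : ⁅x, y⁆ = 0
      · rw [hzero]; exact I.zero_mem
      by_cases hsum : ξ + η = 0
      · have hneg : η = -ξ := eq_neg_of_add_eq_zero_right hsum
        have hns : -ξ = ξ := by
          rw [← neg_one_smul F ξ, show (-1 : F) = 1 from CharTwo.neg_eq 1, one_smul]
        have hηξ : η = ξ := hneg.trans hns
        exact absurd (hsq ξ hξ x hx y (hηξ ▸ hy)) hzero
      · have hmem : ⁅x, y⁆ ∈ rootSpace t (ξ + η) := lie_mem_rootSpace_add hx hy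
        have hroot : (ξ + η) ∈ rootSet t :=
          ⟨hsum, (Submodule.ne_bot_iff _).mpr ⟨⁅x, y⁆, hmem, hzero⟩⟩
        exact hrootle _ hroot hmem
  -- t is abelian
  haveI habelI : IsLieAbelian t := ⟨fun a b => Subtype.ext (by
    rw [LieSubalgebra.coe_bracket]; exact habel a b)⟩
  -- semisimplicity of toral elements
  have hkey : ∀ x : t, ∀ mu : F,
      (LieModule.toEnd F t g x).maxGenEigenspace mu
        = (LieModule.toEnd F t g x).eigenspace mu := by
    intro x mu
    set A := LieModule.toEnd F t g x with hA
    set w : ℕ → g := fun i => p^[i] (x : g) with hwdef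
    have hw0 : w 0 = (x : g) := rfl
    have hwsucc : ∀ i, w (i + 1) = p (w i) := fun i => Function.iterate_succ_apply' p i _
    have hwt : ∀ i, w i ∈ t := by
      intro i; induction i with
      | zero => exact x.2
      | succ i ih => rw [hwsucc]; exact hmax.1.1 _ ih
    have hp0 : p 0 = 0 := by
      have h := hp.smul_pow 0 0
      simpa using h
    have hpadd : ∀ a ∈ t, ∀ b ∈ t, p (a + b) = p a + p b := by
      intro a ha b hb
      rw [hp.add_pow, habel ⟨a, ha⟩ ⟨b, hb⟩, add_zero]
    have hsummem : ∀ (m : ℕ) (a : ℕ → F), (∑ i ∈ Finset.range m, a i • w i) ∈ t := by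
      intro m a
      have : (∑ i ∈ Finset.range m, a i • w i) ∈ t.toSubmodule :=
        Submodule.sum_mem _ fun i _ => Submodule.smul_mem _ _ (hwt i)
      exact this
    have hqsum : ∀ (m : ℕ) (a : ℕ → F),
        p (∑ i ∈ Finset.range m, a i • w i) = ∑ i ∈ Finset.range m, (a i) ^ 2 • w (i + 1) := by
      intro m a
      induction m with
      | zero => simpa using hp0
      | succ m ih =>
        rw [Finset.sum_range_succ,
          hpadd _ (hsummem m a) _ (Submodule.smul_mem t.toSubmodule _ (hwt m)), ih,
          hp.smul_pow, ← hwsucc m, Finset.sum_range_succ]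
    have hpinj : Set.InjOn p (t : Set g) := hmax.1.2.injOn
    -- descent to a relation with nonzero constant coefficient
    have hdesc : ∀ (m : ℕ) (c : ℕ → F), (∑ i ∈ Finset.range m, c i • w i = 0) →
        (∃ i < m, c i ≠ 0) →
        ∃ c' : ℕ → F, c' 0 ≠ 0 ∧ ∑ i ∈ Finset.range m, c' i • w i = 0 := by
      intro m
      induction m with
      | zero => rintro c - ⟨i, hi, -⟩; omega
      | succ m ih =>
        intro c hsum hex
        by_cases hc0 : c 0 = 0
        · have hshift : ∑ i ∈ Finset.range m, c (i + 1) • w (i + 1) = 0 := by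
            rw [Finset.sum_range_succ'] at hsum
            simpa [hc0] using hsum
          choose b hb using fun i =>
            IsAlgClosed.exists_pow_nat_eq (c (i + 1)) (n := 2) (by norm_num)
          have hbs : ∑ i ∈ Finset.range m, b i • w i = 0 := by
            have heq : p (∑ i ∈ Finset.range m, b i • w i) = p 0 := by
              rw [hp0, hqsum]
              rw [Finset.sum_congr rfl fun i _ => by rw [hb i]]
              exact hshift
            exact hpinj (hsummem m b) t.zero_mem heq
          obtain ⟨i, him, hine⟩ := hex
          obtain ⟨j, rfl⟩ : ∃ j, i = j + 1 := by
            cases i with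
            | zero => exact absurd hc0 hine
            | succ j => exact ⟨j, rfl⟩
          have hj : j < m := by omega
          have hbj : b j ≠ 0 := by
            intro h0
            apply hine
            rw [← hb j, h0]
            ring
          obtain ⟨c', hc'0, hc'sum⟩ := ih b hbs ⟨j, hj, hbj⟩
          have h0m : 0 < m := by omega
          refine ⟨fun i => if i < m then c' i else 0, by simp [h0m, hc'0], ?_⟩
          have hsum2 : ∑ i ∈ Finset.range (m + 1), (if i < m then c' i else 0) • w i
              = ∑ i ∈ Finset.range m, c' i • w i := by
            simp only [Finset.sum_range_succ, lt_self_iff_false, if_false, zero_smul, add_zero]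
            exact Finset.sum_congr rfl fun i hi => by rw [if_pos (Finset.mem_range.mp hi)]
          exact hsum2.trans hc'sum
        · exact ⟨c, hc0, hsum⟩
    -- a nontrivial linear relation among the iterates
    have hdep : ∃ c : ℕ → F, c 0 ≠ 0 ∧
        ∑ i ∈ Finset.range (Module.finrank F t + 1), c i • w i = 0 := by
      set d := Module.finrank F t with hd
      have hnli : ¬ LinearIndependent F (fun i : Fin (d + 1) => (⟨w i, hwt i⟩ : t)) := by
        intro hli
        have h := hli.fintype_card_le_finrank
        simp only [Fintype.card_fin] at h
        omega
      obtain ⟨cf, hcfsum, i0, hi0⟩ := Fintype.not_linearIndependent_iff.mp hnli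
      set c : ℕ → F := fun i => if h : i < d + 1 then cf ⟨i, h⟩ else 0 with hc
      have hcs : ∑ i ∈ Finset.range (d + 1), c i • w i = 0 := by
        have h1 : ((∑ i : Fin (d + 1), cf i • (⟨w i, hwt i⟩ : t) : t) : g) = 0 := by
          rw [hcfsum]; rfl
        rw [← Fin.sum_univ_eq_sum_range (fun i => c i • w i) (d + 1)]
        have h2 : ∀ i : Fin (d + 1), c i • w i = ((cf i • (⟨w i, hwt i⟩ : t) : t) : g) := by
          intro i
          have hci : c (i : ℕ) = cf i := by simp [hc, i.isLt, Nat.lt_succ_iff.mp i.isLt]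
          rw [hci]
          rfl
        rw [Finset.sum_congr rfl fun i _ => h2 i]
        simpa using h1
      have hex : ∃ i < d + 1, c i ≠ 0 := by
        refine ⟨i0, i0.isLt, ?_⟩
        simpa [hc, i0.isLt, Nat.lt_succ_iff.mp i0.isLt, Fin.eta] using hi0
      exact hdesc (d + 1) c hcs hex
    obtain ⟨c, hc0, hcsum⟩ := hdep
    -- powers of A
    have hadp : ∀ i, A ^ (2 ^ i) = LieAlgebra.ad F g (w i) := by
      intro i
      induction i with
      | zero =>
        ext y
        simp [hA, LieModule.toEnd_apply_apply, LieSubalgebra.coe_bracket_of_module,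
          LieAlgebra.ad_apply, hw0]
      | succ i ih =>
        ext y
        have h2 : 2 ^ (i + 1) = 2 ^ i + 2 ^ i := by ring
        rw [h2, pow_add, Module.End.mul_apply, ih]
        simp only [LieAlgebra.ad_apply, hwsucc, hp.ad_pow]
    set N := Module.finrank F t + 1 with hN
    set f : Polynomial F := ∑ i ∈ Finset.range N, Polynomial.C (c i) * Polynomial.X ^ (2 ^ i)
      with hf
    have haev : Polynomial.aeval A f = 0 := by
      rw [hf, map_sum]
      have h1 : ∀ i ∈ Finset.range N,
          Polynomial.aeval A (Polynomial.C (c i) * Polynomial.X ^ 2 ^ i)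
            = c i • LieAlgebra.ad F g (w i) := by
        intro i _
        rw [map_mul, Polynomial.aeval_C, Polynomial.aeval_X_pow, hadp i, Algebra.smul_def]
      rw [Finset.sum_congr rfl h1]
      have h2 : ∑ i ∈ Finset.range N, c i • LieAlgebra.ad F g (w i)
          = LieAlgebra.ad F g (∑ i ∈ Finset.range N, c i • w i) := by
        rw [map_sum]
        exact Finset.sum_congr rfl fun i _ => by rw [map_smul]
      rw [h2, hcsum]
      simp
    have hder : Polynomial.derivative f = Polynomial.C (c 0) := by
      rw [hf, map_sum, Finset.sum_range_succ']
      have h0 : Polynomial.derivative (Polynomial.C (c 0) * Polynomial.X ^ 2 ^ 0)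
          = Polynomial.C (c 0) := by
        simp
      have hrest : ∀ i ∈ Finset.range (Module.finrank F t),
          Polynomial.derivative (Polynomial.C (c (i + 1)) * Polynomial.X ^ 2 ^ (i + 1)) = 0 := by
        intro i _
        rw [Polynomial.derivative_C_mul_X_pow]
        have h2 : ((2 ^ (i + 1) : ℕ) : F) = 0 := by
          rw [Nat.cast_pow]
          rw [show ((2 : ℕ) : F) = 0 from by exact_mod_cast CharP.cast_eq_zero F 2]
          exact zero_pow (Nat.succ_ne_zero i)
        rw [h2, mul_zero, Polynomial.C_0, zero_mul]
      rw [Finset.sum_congr rfl hrest, h0]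
      simp
    have hsep : f.Separable := by
      rw [Polynomial.Separable, hder]
      exact ⟨0, Polynomial.C (c 0)⁻¹, by
        rw [zero_mul, zero_add, ← Polynomial.C_mul, inv_mul_cancel₀ hc0, Polynomial.C_1]⟩
    exact maxGen_eq_eigen_of_separable A hsep haev mu
  -- the idealizer-type submodule M
  set M : Submodule F g :=
    { carrier := {x | ∀ y ∈ I, ⁅x, y⁆ ∈ I}
      add_mem' := fun ha hb y hy => by rw [add_lie]; exact I.add_mem (ha y hy) (hb y hy)
      zero_mem' := fun y hy => by rw [zero_lie]; exact I.zero_mem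
      smul_mem' := fun c x hx y hy => by rw [smul_lie]; exact I.smul_mem c (hx y hy) } with hM
  have hG0M : rootSpace t 0 ≤ M := fun z hz => hG0 z hz
  have hIM : I ≤ M := by
    refine sup_le (fun z hz => hG0 z (hnle hz)) (iSup₂_le fun ξ hξ => fun z hz => hGξ ξ hξ z hz)
  -- weight spaces are contained in M
  have hWM : ∀ χ : (t → F), (LieModule.genWeightSpace g χ : Submodule F g) ≤ M := by
    intro χ
    have heig : ∀ v ∈ LieModule.genWeightSpace g χ, ∀ x : t, ⁅(x : g), v⁆ = χ x • v := by
      intro v hv x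
      have h1 := (LieModule.mem_genWeightSpace g χ v).mp hv x
      have h2 : v ∈ (LieModule.toEnd F t g x).maxGenEigenspace (χ x) :=
        (Module.End.mem_maxGenEigenspace _ _ _).mpr h1
      rw [hkey x (χ x)] at h2
      have h3 := Module.End.mem_eigenspace_iff.mp h2
      rw [LieModule.toEnd_apply_apply, LieSubalgebra.coe_bracket_of_module] at h3
      exact h3
    by_cases hbot : LieModule.genWeightSpace g χ = ⊥
    · rw [hbot]
      intro v hv
      have : v = 0 := by simpa using hv
      rw [this]; exact M.zero_mem
    · have hex : ∃ v0, v0 ∈ LieModule.genWeightSpace g χ ∧ v0 ≠ 0 := by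
        by_contra hcon
        push_neg at hcon
        exact hbot ((LieSubmodule.eq_bot_iff _).mpr fun m hm => hcon m hm)
      obtain ⟨v0, hv0m, hv0⟩ := hex
      set lam : Module.Dual F t :=
        { toFun := χ
          map_add' := by
            intro a b
            apply smul_left_injective F hv0
            show χ (a + b) • v0 = (χ a + χ b) • v0
            have hco : ((a + b : t) : g) = (a : g) + (b : g) := rfl
            rw [← heig v0 hv0m (a + b), hco, add_lie, heig v0 hv0m a, heig v0 hv0m b, add_smul]
          map_smul' := by
            intro r a
            apply smul_left_injective F hv0
            show χ (r • a) • v0 = (r • χ a) • v0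
            have hco : ((r • a : t) : g) = r • (a : g) := rfl
            rw [← heig v0 hv0m (r • a), hco, smul_lie, heig v0 hv0m a, smul_smul, smul_eq_mul] }
        with hlamdef
      have hlamroot : ∀ v ∈ LieModule.genWeightSpace g χ, v ∈ rootSpace t lam :=
        fun v hv x => heig v hv x
      intro v hv
      have hv' : v ∈ LieModule.genWeightSpace g χ := hv
      by_cases hlam : lam = 0
      · exact hG0M (by rw [← hlam]; exact hlamroot v hv')
      · have hroot : lam ∈ rootSet t :=
          ⟨hlam, (Submodule.ne_bot_iff _).mpr ⟨v0, hlamroot v0 hv0m, hv0⟩⟩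
        exact hIM (hrootle lam hroot (hlamroot v hv'))
  -- conclude
  have htop : (⊤ : Submodule F g) ≤ M := by
    have h := LieModule.iSup_genWeightSpace_eq_top F t g
    rw [← LieSubmodule.top_toSubmodule (R := F) (L := t) (M := g), ← h,
      LieSubmodule.iSup_toSubmodule]
    exact iSup_le hWM
  intro x y hy
  have hxM : ∀ y ∈ I, ⁅x, y⁆ ∈ I := htop Submodule.mem_top
  exact hxM y hy
end

section
/- Let g be a Lie 2-algebra with standard maximal torus t, let ξ, η ∈ Δ be distinct t-roots, and let x ∈ g_ξ be such that η(x^{[2]}) ≠ 0 (where η is extended to h by η|_n = 0). Then the restriction of ad(x) to g_η is an injective linear map from g_η into g_{ξ+η}. -/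
/-- if `x ∈ g_ξ` with `η (x^{[2]}) ≠ 0` (with `η` extended to `h = t ⊕ n`
by `η|_n = 0`), then `ad x` restricts to an injective linear map `g_η → g_{ξ+η}`. -/
theorem statement4
    {F : Type*} [Field F] [IsAlgClosed F] [CharP F 2]
    {g : Type*} [LieRing g] [LieAlgebra F g] [FiniteDimensional F g]
    (p : g → g) (hp : IsTwoMap F p)
    (t : LieSubalgebra F g) (hmax : IsMaxTorus F p t)
    (n : Submodule F g)
    (hn : ∀ x : g, x ∈ n ↔ x ∈ rootSpace t 0 ∧ IsTwoNilpotent p x)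
    (hstd : ∀ x ∈ rootSpace t 0, ∀ y ∈ n, ⁅x, y⁆ ∈ n)
    (hdecomp : rootSpace t 0 = t.toSubmodule ⊔ n)
    (hdisj : Disjoint t.toSubmodule n)
    (ξ η : Module.Dual F t) (hξ : ξ ∈ rootSet t) (hη : η ∈ rootSet t) (hne : ξ ≠ η)
    (x : g) (hx : x ∈ rootSpace t ξ)
    (hxk : ∃ s : t, ∃ m ∈ n, p x = (s : g) + m ∧ η s ≠ 0) :
    (∀ y ∈ rootSpace t η, ⁅x, y⁆ ∈ rootSpace t (ξ + η)) ∧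
      ∀ y ∈ rootSpace t η, ⁅x, y⁆ = 0 → y = 0 := by
  classical
  constructor
  · intro y hy u
    have h1 : ⁅(u : g), ⁅x, y⁆⁆ = ⁅⁅(u : g), x⁆, y⁆ + ⁅x, ⁅(u : g), y⁆⁆ := leibniz_lie _ _ _
    rw [h1, hx u, hy u, smul_lie, lie_smul, ← add_smul]
    rfl
  · intro y hy hxy
    obtain ⟨s, m, hm, hpx, hs⟩ := hxk
    have h0 : ⁅p x, y⁆ = 0 := by
      rw [hp.ad_pow, hxy, lie_zero]
    have h1 : (η s) • y + ⁅m, y⁆ = 0 := by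
      rw [← hy s, ← add_lie, ← hpx, h0]
    set D : g →ₗ[F] g := LieAlgebra.ad F g m with hD
    set c : F := -(η s)⁻¹ with hc
    have hbase : y = c • D y := by
      have h2 : ⁅m, y⁆ = -((η s) • y) := by
        rw [eq_neg_iff_add_eq_zero, add_comm]; exact h1
      have : D y = ⁅m, y⁆ := rfl
      rw [this, h2, hc, neg_smul, smul_neg, neg_neg, smul_smul,
        inv_mul_cancel₀ hs, one_smul]
    -- iteration: y = c^j • (D^j) y
    have hiter : ∀ j : ℕ, y = (c ^ j) • (D ^ j) y := by
      intro j
      induction j with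
      | zero => simp
      | succ j ih =>
        have hDj : (D ^ j) y = c • (D ^ (j + 1)) y := by
          calc (D ^ j) y = (D ^ j) (c • D y) := by rw [← hbase]
          _ = c • (D ^ j) (D y) := by rw [map_smul]
          _ = c • (D ^ (j + 1)) y := by rw [pow_succ, Module.End.mul_apply]
        calc y = (c ^ j) • (D ^ j) y := ih
        _ = (c ^ j) • (c • (D ^ (j + 1)) y) := by rw [hDj]
        _ = (c ^ (j + 1)) • (D ^ (j + 1)) y := by
            rw [smul_smul, ← pow_succ]
    -- D is nilpotent: ⁅p^[k] m, z⁆ = (D ^ (2^k)) z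
    have hA : ∀ j : ℕ, ∀ z : g, ⁅p^[j] m, z⁆ = (D ^ (2 ^ j)) z := by
      intro j
      induction j with
      | zero => intro z; simp [hD, LieAlgebra.ad_apply]
      | succ j ih =>
        intro z
        have : p^[j + 1] m = p (p^[j] m) := Function.iterate_succ_apply' p j m
        rw [this, hp.ad_pow, ih, ih, ← Module.End.mul_apply, ← pow_add]
        congr 1
        ring
    obtain ⟨-, k, hk⟩ := (hn m).mp hm
    have hzero : (D ^ (2 ^ k)) y = 0 := by
      rw [← hA k y, hk, zero_lie]
    have := hiter (2 ^ k)
    rw [hzero, smul_zero] at this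
    exact this
end

section
/- Let g be a centerless Lie 2-algebra with MT(g) = 3, standard maximal torus t with toral basis {t1, t2, t3} and dual basis {α, β, γ} of t*, whose t-root set is Δ = {α, β, γ, α+β, α+γ, β+γ, α+β+γ}. If dim(g_α) ≥ dim(g_β) and dim(g_β) > dim(g_ξ) for every ξ ∈ Δ \ {α, β}, then I := span{t3, t1 + t2} ⊕ n ⊕ ⊕_{ξ∈Δ} g_ξ is an ideal of g. -/

private lemma ext3 {F : Type*} [Field F] {g : Type*} [LieRing g] [LieAlgebra F g]
    {t : LieSubalgebra F g} {t₁ t₂ t₃ : t}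
    (hspan : Submodule.span F ({t₁, t₂, t₃} : Set t) = ⊤)
    (μ ν : Module.Dual F t)
    (e1 : μ t₁ = ν t₁) (e2 : μ t₂ = ν t₂) (e3 : μ t₃ = ν t₃) : μ = ν := by
  apply LinearMap.ext
  intro s
  have hs : s ∈ Submodule.span F ({t₁, t₂, t₃} : Set t) := by rw [hspan]; trivial
  induction hs using Submodule.span_induction with
  | mem x hx =>
      rcases hx with rfl | rfl | rfl
      · exact e1
      · exact e2
      · exact e3
  | zero => simp
  | add x y _ _ hx hy => simp [hx, hy]
  | smul c x _ hx => simp [hx]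

set_option maxHeartbeats 3200000 in
private lemma sumroot {F : Type*} [Field F] {g : Type*} [LieRing g] [LieAlgebra F g]
    {t : LieSubalgebra F g} {t₁ t₂ t₃ : t}
    (hspan : Submodule.span F ({t₁, t₂, t₃} : Set t) = ⊤)
    {α β γ : Module.Dual F t}
    (h11 : (1 : F) + 1 = 0)
    (ha1 : α t₁ = 1) (ha2 : α t₂ = 0) (ha3 : α t₃ = 0)
    (hb1 : β t₁ = 0) (hb2 : β t₂ = 1) (hb3 : β t₃ = 0)
    (hg1 : γ t₁ = 0) (hg2 : γ t₂ = 0) (hg3 : γ t₃ = 1)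
    (hroots : rootSet t = ({α, β, γ, α + β, α + γ, β + γ, α + β + γ} :
      Set (Module.Dual F t))) :
    ∀ μ ν : Module.Dual F t, μ ∈ rootSet t → ν ∈ rootSet t → μ ≠ ν →
      μ + ν ∈ rootSet t := by
  intro μ ν hμ hν hne
  rw [hroots] at hμ hν ⊢
  simp only [Set.mem_insert_iff, Set.mem_singleton_iff] at hμ hν ⊢
  rcases hμ with rfl|rfl|rfl|rfl|rfl|rfl|rfl <;>
    rcases hν with rfl|rfl|rfl|rfl|rfl|rfl|rfl <;>
    solve
      | exact absurd rfl hne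
      | (left; apply ext3 hspan <;> simp only [LinearMap.add_apply,ha1,ha2,ha3,hb1,hb2,hb3,hg1,hg2,hg3,h11,add_zero,zero_add])
      | (right; left; apply ext3 hspan <;> simp only [LinearMap.add_apply,ha1,ha2,ha3,hb1,hb2,hb3,hg1,hg2,hg3,h11,add_zero,zero_add])
      | (right; right; left; apply ext3 hspan <;> simp only [LinearMap.add_apply,ha1,ha2,ha3,hb1,hb2,hb3,hg1,hg2,hg3,h11,add_zero,zero_add])
      | (right; right; right; left; apply ext3 hspan <;> simp only [LinearMap.add_apply,ha1,ha2,ha3,hb1,hb2,hb3,hg1,hg2,hg3,h11,add_zero,zero_add])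
      | (right; right; right; right; left; apply ext3 hspan <;> simp only [LinearMap.add_apply,ha1,ha2,ha3,hb1,hb2,hb3,hg1,hg2,hg3,h11,add_zero,zero_add])
      | (right; right; right; right; right; left; apply ext3 hspan <;> simp only [LinearMap.add_apply,ha1,ha2,ha3,hb1,hb2,hb3,hg1,hg2,hg3,h11,add_zero,zero_add])
      | (right; right; right; right; right; right; apply ext3 hspan <;> simp only [LinearMap.add_apply,ha1,ha2,ha3,hb1,hb2,hb3,hg1,hg2,hg3,h11,add_zero,zero_add])

/-- if all seven roots occur, `dim g_α ≥ dim g_β` and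
`dim g_β > dim g_ξ` for every root `ξ ∉ {α, β}`, then
`span{t3, t1 + t2} ⊕ n ⊕ ⊕_{ξ∈Δ} g_ξ` is an ideal of `g`. -/
theorem statement10
    {F : Type*} [Field F] [IsAlgClosed F] [CharP F 2]
    {g : Type*} [LieRing g] [LieAlgebra F g] [FiniteDimensional F g]
    (p : g → g) (hp : IsTwoMap F p)
    (hcenter : LieAlgebra.center F g = ⊥)
    (t : LieSubalgebra F g) (hmax : IsMaxTorus F p t)
    (n : Submodule F g)
    (hn : ∀ x : g, x ∈ n ↔ x ∈ rootSpace t 0 ∧ IsTwoNilpotent p x)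
    (hstd : ∀ x ∈ rootSpace t 0, ∀ y ∈ n, ⁅x, y⁆ ∈ n)
    (hdecomp : rootSpace t 0 = t.toSubmodule ⊔ n)
    (hdisj : Disjoint t.toSubmodule n)
    (hrank : ∀ s : LieSubalgebra F g, IsTorus F p s → Module.finrank F s ≤ 3)
    (hdimt : Module.finrank F t = 3)
    (t₁ t₂ t₃ : t)
    (htor1 : p (t₁ : g) = (t₁ : g)) (htor2 : p (t₂ : g) = (t₂ : g))
    (htor3 : p (t₃ : g) = (t₃ : g))
    (hspan : Submodule.span F ({t₁, t₂, t₃} : Set t) = ⊤)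
    (α β γ : Module.Dual F t)
    (hα : α t₁ = 1 ∧ α t₂ = 0 ∧ α t₃ = 0)
    (hβ : β t₁ = 0 ∧ β t₂ = 1 ∧ β t₃ = 0)
    (hγ : γ t₁ = 0 ∧ γ t₂ = 0 ∧ γ t₃ = 1)
    (hroots : rootSet t = ({α, β, γ, α + β, α + γ, β + γ, α + β + γ} :
      Set (Module.Dual F t)))
    (hab : Module.finrank F (rootSpace t β) ≤ Module.finrank F (rootSpace t α))
    (hbig : ∀ ξ ∈ rootSet t, ξ ≠ α → ξ ≠ β →
      Module.finrank F (rootSpace t ξ) < Module.finrank F (rootSpace t β)) :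
    ∀ x y : g,
      y ∈ Submodule.span F ({(t₃ : g), (t₁ : g) + (t₂ : g)} : Set g) ⊔ n ⊔
          (⨆ ξ ∈ rootSet t, rootSpace t ξ) →
      ⁅x, y⁆ ∈ Submodule.span F ({(t₃ : g), (t₁ : g) + (t₂ : g)} : Set g) ⊔ n ⊔
          (⨆ ξ ∈ rootSet t, rootSpace t ξ) := by
  classical
  -- ===== basic char-2 facts =====
  have h2F : (2 : F) = 0 := by exact_mod_cast (CharP.cast_eq_zero F 2)
  have h11 : (1 : F) + 1 = 0 := by
    have : (1 : F) + 1 = (2 : F) := by norm_num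
    rw [this, h2F]
  have hvvD : ∀ v : Module.Dual F t, v + v = 0 := by
    intro v; rw [← two_smul F v, h2F, zero_smul]
  have hnegD : ∀ v : Module.Dual F t, -v = v := by
    intro v; exact neg_eq_of_add_eq_zero_left (hvvD v)
  have htle : t.toSubmodule ≤ rootSpace t 0 := hdecomp ▸ le_sup_left
  have hmem0 : ∀ v : g, v ∈ rootSpace t 0 ↔ ∀ s : t, ⁅(s : g), v⁆ = 0 := by
    intro v
    constructor
    · intro hv s; have := hv s; simpa using this
    · intro hv s; simpa using hv s
  have habel : ∀ a b : t, ⁅(a : g), (b : g)⁆ = 0 := by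
    intro a b; exact (hmem0 (b : g)).mp (htle b.2) a
  obtain ⟨ha1, ha2, ha3⟩ := hα
  obtain ⟨hb1, hb2, hb3⟩ := hβ
  obtain ⟨hg1, hg2, hg3⟩ := hγ
  have memdef : ∀ (lam : Module.Dual F t) (v : g),
      v ∈ rootSpace t lam ↔ ∀ s : t, ⁅(s : g), v⁆ = lam s • v := fun _ _ => Iff.rfl
  have EXT3 := ext3 hspan
  have hαr : α ∈ rootSet t := by rw [hroots]; left; rfl
  have hβr : β ∈ rootSet t := by rw [hroots]; right; left; rfl
  have SUMROOT := sumroot hspan h11 ha1 ha2 ha3 hb1 hb2 hb3 hg1 hg2 hg3 hroots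
  have BRACKET : ∀ (μ ν : Module.Dual F t) (v w : g), v ∈ rootSpace t μ →
      w ∈ rootSpace t ν → ⁅v, w⁆ ∈ rootSpace t (μ + ν) := by
    intro μ ν v w hv hw
    rw [memdef]
    intro s
    rw [leibniz_lie, hv s, hw s, smul_lie, lie_smul, LinearMap.add_apply, add_smul]
  have hp0 : p (0 : g) = 0 := by
    have := hp.smul_pow 0 0
    simpa using this
  have SQ0 : ∀ (ξ : Module.Dual F t) (z : g), z ∈ rootSpace t ξ →
      p z ∈ rootSpace t 0 := by
    intro ξ z hz
    rw [hmem0]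
    intro s
    have h1 : ⁅p z, (s : g)⁆ = ⁅z, ⁅z, (s : g)⁆⁆ := hp.ad_pow z s
    have h2 : ⁅z, (s : g)⁆ = -(ξ s • z) := by rw [← lie_skew, hz s]
    have h3 : ⁅p z, (s : g)⁆ = 0 := by rw [h1, h2]; simp
    rw [← lie_skew, h3, neg_zero]
  have SQDEC : ∀ (ξ : Module.Dual F t) (z : g), z ∈ rootSpace t ξ →
      ∃ (h : t) (m : g), m ∈ n ∧ p z = (h : g) + m := by
    intro ξ z hz
    have h0 : p z ∈ t.toSubmodule ⊔ n := by rw [← hdecomp]; exact SQ0 ξ z hz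
    rcases Submodule.mem_sup.mp h0 with ⟨a, ha, b, hb, hab⟩
    exact ⟨⟨a, ha⟩, b, hb, hab.symm⟩
  have ITERAD : ∀ (m : g) (k : ℕ) (u : g),
      (fun w => ⁅m, w⁆)^[2 ^ k] u = ⁅p^[k] m, u⁆ := by
    intro m k
    induction k with
    | zero => intro u; simp
    | succ k ih =>
        intro u
        have h2k : 2 ^ (k + 1) = 2 ^ k + 2 ^ k := by ring
        rw [h2k, Function.iterate_add_apply, ih, ih, ← hp.ad_pow,
          Function.iterate_succ_apply']
  have ITERSMUL : ∀ (m : g) (j : ℕ) (d : F) (u : g),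
      (fun w => ⁅m, w⁆)^[j] (d • u) = d • (fun w => ⁅m, w⁆)^[j] u := by
    intro m j d
    induction j with
    | zero => intro u; simp
    | succ j ih => intro u; simp only [Function.iterate_succ_apply, lie_smul, ih]
  have NILP : ∀ m ∈ n, ∀ c : F, c ≠ 0 → ∀ u : g, c • u + ⁅m, u⁆ = 0 → u = 0 := by
    intro m hm c hc u hu
    obtain ⟨k, hk⟩ := ((hn m).mp hm).2
    set f : g → g := fun w => ⁅m, w⁆ with hf
    have hmu : f u = -(c • u) := eq_neg_of_add_eq_zero_right hu
    have hrec : u = (-c⁻¹) • f u := by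
      rw [hmu, smul_neg, neg_smul, neg_neg, smul_smul, inv_mul_cancel₀ hc, one_smul]
    have hiter : ∀ j : ℕ, u = ((-c⁻¹) ^ j) • f^[j] u := by
      intro j
      induction j with
      | zero => simp
      | succ j ih =>
          calc u = ((-c⁻¹) ^ j) • f^[j] u := ih
          _ = ((-c⁻¹) ^ j) • f^[j] ((-c⁻¹) • f u) := by rw [← hrec]
          _ = ((-c⁻¹) ^ j) • ((-c⁻¹) • f^[j] (f u)) := by rw [ITERSMUL]
          _ = ((-c⁻¹) ^ (j + 1)) • f^[j + 1] u := by
                rw [smul_smul, ← pow_succ, Function.iterate_succ_apply]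
    have hz2 : f^[2 ^ k] u = ⁅p^[k] m, u⁆ := ITERAD m k u
    have := hiter (2 ^ k)
    rw [hz2, hk, zero_lie, smul_zero] at this
    exact this
  have LEMA : ∀ (ξ μ : Module.Dual F t) (z : g), z ∈ rootSpace t ξ →
      ∀ (h : t) (m : g), m ∈ n → p z = (h : g) + m → μ h ≠ 0 →
      Module.finrank F (rootSpace t μ) ≤ Module.finrank F (rootSpace t (μ + ξ)) := by
    intro ξ μ z hz h m hm hpz hμh
    have hmap : ∀ v ∈ rootSpace t μ, ⁅z, v⁆ ∈ rootSpace t (μ + ξ) := by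
      intro v hv
      have := BRACKET ξ μ z v hz hv
      rwa [add_comm ξ μ] at this
    let A : rootSpace t μ →ₗ[F] rootSpace t (μ + ξ) :=
      { toFun := fun v => ⟨⁅z, (v : g)⁆, hmap v v.2⟩
        map_add' := by intro a b; apply Subtype.ext; simp
        map_smul' := by intro c a; apply Subtype.ext; simp }
    have hinj : Function.Injective A := by
      rw [injective_iff_map_eq_zero]
      intro v hv0
      have hzv : ⁅z, (v : g)⁆ = 0 := congrArg Subtype.val hv0
      have h1 : ⁅p z, (v : g)⁆ = 0 := by rw [hp.ad_pow, hzv, lie_zero]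
      have h2 : ⁅p z, (v : g)⁆ = μ h • (v : g) + ⁅m, (v : g)⁆ := by
        rw [hpz, add_lie, v.2 h]
      rw [h2] at h1
      exact Subtype.ext (NILP m hm (μ h) hμh (v : g) h1)
    exact LinearMap.finrank_le_finrank_of_injective hinj
  have XI0 : ∀ (ξ : Module.Dual F t) (z : g), z ∈ rootSpace t ξ →
      ∀ (h : t) (m : g), m ∈ n → p z = (h : g) + m → ξ h = 0 := by
    intro ξ z hz h m hm hpz
    by_contra hne
    have h1 : ⁅p z, z⁆ = 0 := by rw [hp.ad_pow, lie_self, lie_zero]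
    have h2 : ξ h • z + ⁅m, z⁆ = 0 := by
      rw [hpz, add_lie, hz h] at h1; exact h1
    have hz0 : z = 0 := NILP m hm (ξ h) hne z h2
    have hpz0 : p z = 0 := by rw [hz0, hp0]
    rw [hpz0] at hpz
    have hhn : (h : g) ∈ n := by
      have : (h : g) = -m := eq_neg_of_add_eq_zero_left hpz.symm
      rw [this]; exact n.neg_mem hm
    have hh0 : (h : g) = 0 := Submodule.disjoint_def.mp hdisj (h : g) h.2 hhn
    have : h = 0 := Subtype.ext hh0
    rw [this, map_zero] at hne
    exact hne rfl
  have KEY : ∀ ξ ∈ rootSet t, ∀ z ∈ rootSpace t ξ,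
      ∀ (h : t) (m : g), m ∈ n → p z = (h : g) + m → (α + β) h = 0 := by
    intro ξ hξ z hz h m hm hpz
    have hξh : ξ h = 0 := XI0 ξ z hz h m hm hpz
    by_cases hcase : ξ = α + β
    · rw [← hcase]; exact hξh
    by_contra hne
    have hαβ : α h ≠ 0 ∨ β h ≠ 0 := by
      by_contra hcon
      push_neg at hcon
      exact hne (by rw [LinearMap.add_apply, hcon.1, hcon.2, add_zero])
    have hξ0 : ξ ≠ 0 := hξ.1
    have crunch : ∀ μ : Module.Dual F t, μ ∈ rootSet t → μ h ≠ 0 →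
        Module.finrank F (rootSpace t β) ≤ Module.finrank F (rootSpace t μ) →
        μ + ξ ≠ α → μ + ξ ≠ β → False := by
      intro μ hμr hμh hdim hne1 hne2
      have hμξ : μ ≠ ξ := by
        intro e; rw [e, hξh] at hμh; exact hμh rfl
      have hsum : μ + ξ ∈ rootSet t := SUMROOT μ ξ hμr hξ hμξ
      have h1 := LEMA ξ μ z hz h m hm hpz hμh
      have h2 := hbig (μ + ξ) hsum hne1 hne2
      omega
    rcases hαβ with hαh | hβh
    · refine crunch α hαr hαh hab ?_ ?_
      · intro e
        apply hξ0
        have e2 : α + ξ = α + 0 := by rw [e, add_zero]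
        exact add_left_cancel e2
      · intro e
        apply hcase
        have e2 : α + (α + ξ) = α + β := by rw [e]
        rwa [← add_assoc, hvvD α, zero_add] at e2
    · refine crunch β hβr hβh (le_refl _) ?_ ?_
      · intro e
        apply hcase
        have e2 : β + (β + ξ) = β + α := by rw [e]
        rw [← add_assoc, hvvD β, zero_add] at e2
        rw [e2, add_comm]
      · intro e
        apply hξ0
        have e2 : β + ξ = β + 0 := by rw [e, add_zero]
        exact add_left_cancel e2
  set S : Submodule F g :=
    Submodule.span F ({(t₃ : g), (t₁ : g) + (t₂ : g)} : Set g) with hS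
  have KER : ∀ h : t, (α + β) h = 0 → (h : g) ∈ S := by
    intro h hh
    have hmem : h ∈ Submodule.span F ({t₁, t₂, t₃} : Set t) := by rw [hspan]; trivial
    rw [Submodule.mem_span_insert] at hmem
    obtain ⟨c1, r1, hr1, e1⟩ := hmem
    rw [Submodule.mem_span_insert] at hr1
    obtain ⟨c2, r2, hr2, e2⟩ := hr1
    rw [Submodule.mem_span_singleton] at hr2
    obtain ⟨c3, e3⟩ := hr2
    have hrep : h = c1 • t₁ + c2 • t₂ + c3 • t₃ := by rw [e1, e2, ← e3]; abel
    have hval : c1 + c2 = 0 := by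
      rw [hrep] at hh
      simpa [LinearMap.add_apply, ha1, ha2, ha3, hb1, hb2, hb3, mul_comm] using hh
    have hc2 : c2 = c1 := by
      have h1 : c2 = -c1 := by
        have := eq_neg_of_add_eq_zero_right hval
        exact this
      rw [h1, CharTwo.neg_eq]
    have hco : (h : g) = c1 • ((t₁ : g) + (t₂ : g)) + c3 • (t₃ : g) := by
      rw [hrep, hc2]
      push_cast
      rw [smul_add]
    rw [hco]
    refine Submodule.add_mem _ ?_ ?_
    · exact Submodule.smul_mem _ _ (Submodule.subset_span (by right; rfl))
    · exact Submodule.smul_mem _ _ (Submodule.subset_span (by left; rfl))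
  have HARD : ∀ ξ ∈ rootSet t, ∀ v ∈ rootSpace t ξ, ∀ w ∈ rootSpace t ξ,
      ⁅v, w⁆ ∈ S ⊔ n := by
    intro ξ hξ v hv w hw
    obtain ⟨hv2, mv, hmv, hpv⟩ := SQDEC ξ v hv
    obtain ⟨hw2, mw, hmw, hpw⟩ := SQDEC ξ w hw
    obtain ⟨hvw2, mvw, hmvw, hpvw⟩ := SQDEC ξ (v + w) ((rootSpace t ξ).add_mem hv hw)
    have e : ⁅v, w⁆ = ((hvw2 - hv2 - hw2 : t) : g) + (mvw - mv - mw) := by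
      have hq := hp.add_pow v w
      rw [hpvw, hpv, hpw] at hq
      have e2 : ⁅v, w⁆ = ((hvw2 : g) + mvw) - ((hv2 : g) + mv) - ((hw2 : g) + mw) := by
        rw [hq]; abel
      rw [e2]
      push_cast
      abel
    have k1 := KEY ξ hξ v hv hv2 mv hmv hpv
    have k2 := KEY ξ hξ w hw hw2 mw hmw hpw
    have k3 := KEY ξ hξ (v + w) ((rootSpace t ξ).add_mem hv hw) hvw2 mvw hmvw hpvw
    have kh : (α + β) (hvw2 - hv2 - hw2) = 0 := by
      rw [map_sub, map_sub, k1, k2, k3]; ring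
    refine Submodule.mem_sup.mpr ⟨_, KER _ kh, _,
      n.sub_mem (n.sub_mem hmvw hmv) hmw, e.symm⟩
  have SPL : ∀ (s : t), p (s : g) = (s : g) → ∀ x : g, ∃ a b : g, x = a + b ∧
      ⁅(s : g), a⁆ = 0 ∧ ⁅(s : g), b⁆ = b ∧
      ∀ (s' : t) (c : F), ⁅(s' : g), x⁆ = c • x →
        ⁅(s' : g), a⁆ = c • a ∧ ⁅(s' : g), b⁆ = c • b := by
    intro s hs x
    have hidem : ∀ w : g, ⁅(s : g), ⁅(s : g), w⁆⁆ = ⁅(s : g), w⁆ := by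
      intro w
      conv_rhs => rw [← hs]
      rw [hp.ad_pow]
    refine ⟨x - ⁅(s : g), x⁆, ⁅(s : g), x⁆, by abel, ?_, hidem x, ?_⟩
    · rw [lie_sub, hidem x, sub_self]
    · intro s' c hc
      have hcomm : ⁅(s' : g), ⁅(s : g), x⁆⁆ = ⁅(s : g), ⁅(s' : g), x⁆⁆ := by
        rw [leibniz_lie, habel s' s, zero_lie, zero_add]
      constructor
      · rw [lie_sub, hc, hcomm, hc, lie_smul, smul_sub]
      · rw [hcomm, hc, lie_smul]
  have EIG : ∀ (lam : Module.Dual F t) (v : g),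
      ⁅(t₁ : g), v⁆ = lam t₁ • v → ⁅(t₂ : g), v⁆ = lam t₂ • v →
      ⁅(t₃ : g), v⁆ = lam t₃ • v → v ∈ rootSpace t lam := by
    intro lam v e1 e2 e3
    rw [memdef]
    intro s
    have hs : s ∈ Submodule.span F ({t₁, t₂, t₃} : Set t) := by rw [hspan]; trivial
    induction hs using Submodule.span_induction with
    | mem u hu => rcases hu with rfl | rfl | rfl <;> assumption
    | zero => simp
    | add a b _ _ hA hB => simp [add_lie, hA, hB, add_smul]
    | smul c a _ hA =>
        rw [show ((c • a : t) : g) = c • (a : g) from rfl]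
        simp [smul_lie, hA, smul_smul]
  -- decompose an arbitrary element into simultaneous eigencomponents
  have DEC : ∀ x : g, ∃ y000 y100 y010 y001 y110 y101 y011 y111 : g,
      x = y000 + y100 + y010 + y001 + y110 + y101 + y011 + y111 ∧
      y000 ∈ rootSpace t 0 ∧ y100 ∈ rootSpace t α ∧ y010 ∈ rootSpace t β ∧
      y001 ∈ rootSpace t γ ∧ y110 ∈ rootSpace t (α + β) ∧
      y101 ∈ rootSpace t (α + γ) ∧ y011 ∈ rootSpace t (β + γ) ∧
      y111 ∈ rootSpace t (α + β + γ) := by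
    intro x
    obtain ⟨a0, a1, hx, e1a0, e1a1, -⟩ := SPL t₁ htor1 x
    have f1a0 : ⁅(t₁ : g), a0⁆ = (0 : F) • a0 := by rw [e1a0, zero_smul]
    have f1a1 : ⁅(t₁ : g), a1⁆ = (1 : F) • a1 := by rw [e1a1, one_smul]
    obtain ⟨a00, a01, hs0, e2a00, e2a01, pr0⟩ := SPL t₂ htor2 a0
    have f1a00 : ⁅(t₁ : g), a00⁆ = (0 : F) • a00 := (pr0 t₁ 0 f1a0).1
    have f2a00 : ⁅(t₂ : g), a00⁆ = (0 : F) • a00 := by rw [e2a00, zero_smul]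
    have f1a01 : ⁅(t₁ : g), a01⁆ = (0 : F) • a01 := (pr0 t₁ 0 f1a0).2
    have f2a01 : ⁅(t₂ : g), a01⁆ = (1 : F) • a01 := by rw [e2a01, one_smul]
    obtain ⟨a10, a11, hs1, e2a10, e2a11, pr1⟩ := SPL t₂ htor2 a1
    have f1a10 : ⁅(t₁ : g), a10⁆ = (1 : F) • a10 := (pr1 t₁ 1 f1a1).1
    have f2a10 : ⁅(t₂ : g), a10⁆ = (0 : F) • a10 := by rw [e2a10, zero_smul]
    have f1a11 : ⁅(t₁ : g), a11⁆ = (1 : F) • a11 := (pr1 t₁ 1 f1a1).2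
    have f2a11 : ⁅(t₂ : g), a11⁆ = (1 : F) • a11 := by rw [e2a11, one_smul]
    obtain ⟨a000, a001, hs00, e3a000, e3a001, pr00⟩ := SPL t₃ htor3 a00
    have f1a000 : ⁅(t₁ : g), a000⁆ = (0 : F) • a000 := (pr00 t₁ 0 f1a00).1
    have f2a000 : ⁅(t₂ : g), a000⁆ = (0 : F) • a000 := (pr00 t₂ 0 f2a00).1
    have f3a000 : ⁅(t₃ : g), a000⁆ = (0 : F) • a000 := by rw [e3a000, zero_smul]
    have f1a001 : ⁅(t₁ : g), a001⁆ = (0 : F) • a001 := (pr00 t₁ 0 f1a00).2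
    have f2a001 : ⁅(t₂ : g), a001⁆ = (0 : F) • a001 := (pr00 t₂ 0 f2a00).2
    have f3a001 : ⁅(t₃ : g), a001⁆ = (1 : F) • a001 := by rw [e3a001, one_smul]
    obtain ⟨a010, a011, hs01, e3a010, e3a011, pr01⟩ := SPL t₃ htor3 a01
    have f1a010 : ⁅(t₁ : g), a010⁆ = (0 : F) • a010 := (pr01 t₁ 0 f1a01).1
    have f2a010 : ⁅(t₂ : g), a010⁆ = (1 : F) • a010 := (pr01 t₂ 1 f2a01).1
    have f3a010 : ⁅(t₃ : g), a010⁆ = (0 : F) • a010 := by rw [e3a010, zero_smul]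
    have f1a011 : ⁅(t₁ : g), a011⁆ = (0 : F) • a011 := (pr01 t₁ 0 f1a01).2
    have f2a011 : ⁅(t₂ : g), a011⁆ = (1 : F) • a011 := (pr01 t₂ 1 f2a01).2
    have f3a011 : ⁅(t₃ : g), a011⁆ = (1 : F) • a011 := by rw [e3a011, one_smul]
    obtain ⟨a100, a101, hs10, e3a100, e3a101, pr10⟩ := SPL t₃ htor3 a10
    have f1a100 : ⁅(t₁ : g), a100⁆ = (1 : F) • a100 := (pr10 t₁ 1 f1a10).1
    have f2a100 : ⁅(t₂ : g), a100⁆ = (0 : F) • a100 := (pr10 t₂ 0 f2a10).1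
    have f3a100 : ⁅(t₃ : g), a100⁆ = (0 : F) • a100 := by rw [e3a100, zero_smul]
    have f1a101 : ⁅(t₁ : g), a101⁆ = (1 : F) • a101 := (pr10 t₁ 1 f1a10).2
    have f2a101 : ⁅(t₂ : g), a101⁆ = (0 : F) • a101 := (pr10 t₂ 0 f2a10).2
    have f3a101 : ⁅(t₃ : g), a101⁆ = (1 : F) • a101 := by rw [e3a101, one_smul]
    obtain ⟨a110, a111, hs11, e3a110, e3a111, pr11⟩ := SPL t₃ htor3 a11
    have f1a110 : ⁅(t₁ : g), a110⁆ = (1 : F) • a110 := (pr11 t₁ 1 f1a11).1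
    have f2a110 : ⁅(t₂ : g), a110⁆ = (1 : F) • a110 := (pr11 t₂ 1 f2a11).1
    have f3a110 : ⁅(t₃ : g), a110⁆ = (0 : F) • a110 := by rw [e3a110, zero_smul]
    have f1a111 : ⁅(t₁ : g), a111⁆ = (1 : F) • a111 := (pr11 t₁ 1 f1a11).2
    have f2a111 : ⁅(t₂ : g), a111⁆ = (1 : F) • a111 := (pr11 t₂ 1 f2a11).2
    have f3a111 : ⁅(t₃ : g), a111⁆ = (1 : F) • a111 := by rw [e3a111, one_smul]
    have ma000 : a000 ∈ rootSpace t (0 : Module.Dual F t) := by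
      refine EIG (0 : Module.Dual F t) a000 ?_ ?_ ?_
      · rw [show (0 : Module.Dual F t) t₁ = (0 : F) by simp only [LinearMap.add_apply, LinearMap.zero_apply, ha1, ha2, ha3, hb1, hb2, hb3, hg1, hg2, hg3, add_zero, zero_add]]
        exact f1a000
      · rw [show (0 : Module.Dual F t) t₂ = (0 : F) by simp only [LinearMap.add_apply, LinearMap.zero_apply, ha1, ha2, ha3, hb1, hb2, hb3, hg1, hg2, hg3, add_zero, zero_add]]
        exact f2a000
      · rw [show (0 : Module.Dual F t) t₃ = (0 : F) by simp only [LinearMap.add_apply, LinearMap.zero_apply, ha1, ha2, ha3, hb1, hb2, hb3, hg1, hg2, hg3, add_zero, zero_add]]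
        exact f3a000
    have ma100 : a100 ∈ rootSpace t α := by
      refine EIG α a100 ?_ ?_ ?_
      · rw [show α t₁ = (1 : F) by simp only [LinearMap.add_apply, LinearMap.zero_apply, ha1, ha2, ha3, hb1, hb2, hb3, hg1, hg2, hg3, add_zero, zero_add]]
        exact f1a100
      · rw [show α t₂ = (0 : F) by simp only [LinearMap.add_apply, LinearMap.zero_apply, ha1, ha2, ha3, hb1, hb2, hb3, hg1, hg2, hg3, add_zero, zero_add]]
        exact f2a100
      · rw [show α t₃ = (0 : F) by simp only [LinearMap.add_apply, LinearMap.zero_apply, ha1, ha2, ha3, hb1, hb2, hb3, hg1, hg2, hg3, add_zero, zero_add]]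
        exact f3a100
    have ma010 : a010 ∈ rootSpace t β := by
      refine EIG β a010 ?_ ?_ ?_
      · rw [show β t₁ = (0 : F) by simp only [LinearMap.add_apply, LinearMap.zero_apply, ha1, ha2, ha3, hb1, hb2, hb3, hg1, hg2, hg3, add_zero, zero_add]]
        exact f1a010
      · rw [show β t₂ = (1 : F) by simp only [LinearMap.add_apply, LinearMap.zero_apply, ha1, ha2, ha3, hb1, hb2, hb3, hg1, hg2, hg3, add_zero, zero_add]]
        exact f2a010
      · rw [show β t₃ = (0 : F) by simp only [LinearMap.add_apply, LinearMap.zero_apply, ha1, ha2, ha3, hb1, hb2, hb3, hg1, hg2, hg3, add_zero, zero_add]]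
        exact f3a010
    have ma001 : a001 ∈ rootSpace t γ := by
      refine EIG γ a001 ?_ ?_ ?_
      · rw [show γ t₁ = (0 : F) by simp only [LinearMap.add_apply, LinearMap.zero_apply, ha1, ha2, ha3, hb1, hb2, hb3, hg1, hg2, hg3, add_zero, zero_add]]
        exact f1a001
      · rw [show γ t₂ = (0 : F) by simp only [LinearMap.add_apply, LinearMap.zero_apply, ha1, ha2, ha3, hb1, hb2, hb3, hg1, hg2, hg3, add_zero, zero_add]]
        exact f2a001
      · rw [show γ t₃ = (1 : F) by simp only [LinearMap.add_apply, LinearMap.zero_apply, ha1, ha2, ha3, hb1, hb2, hb3, hg1, hg2, hg3, add_zero, zero_add]]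
        exact f3a001
    have ma110 : a110 ∈ rootSpace t (α + β) := by
      refine EIG (α + β) a110 ?_ ?_ ?_
      · rw [show (α + β) t₁ = (1 : F) by simp only [LinearMap.add_apply, LinearMap.zero_apply, ha1, ha2, ha3, hb1, hb2, hb3, hg1, hg2, hg3, add_zero, zero_add]]
        exact f1a110
      · rw [show (α + β) t₂ = (1 : F) by simp only [LinearMap.add_apply, LinearMap.zero_apply, ha1, ha2, ha3, hb1, hb2, hb3, hg1, hg2, hg3, add_zero, zero_add]]
        exact f2a110
      · rw [show (α + β) t₃ = (0 : F) by simp only [LinearMap.add_apply, LinearMap.zero_apply, ha1, ha2, ha3, hb1, hb2, hb3, hg1, hg2, hg3, add_zero, zero_add]]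
        exact f3a110
    have ma101 : a101 ∈ rootSpace t (α + γ) := by
      refine EIG (α + γ) a101 ?_ ?_ ?_
      · rw [show (α + γ) t₁ = (1 : F) by simp only [LinearMap.add_apply, LinearMap.zero_apply, ha1, ha2, ha3, hb1, hb2, hb3, hg1, hg2, hg3, add_zero, zero_add]]
        exact f1a101
      · rw [show (α + γ) t₂ = (0 : F) by simp only [LinearMap.add_apply, LinearMap.zero_apply, ha1, ha2, ha3, hb1, hb2, hb3, hg1, hg2, hg3, add_zero, zero_add]]
        exact f2a101
      · rw [show (α + γ) t₃ = (1 : F) by simp only [LinearMap.add_apply, LinearMap.zero_apply, ha1, ha2, ha3, hb1, hb2, hb3, hg1, hg2, hg3, add_zero, zero_add]]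
        exact f3a101
    have ma011 : a011 ∈ rootSpace t (β + γ) := by
      refine EIG (β + γ) a011 ?_ ?_ ?_
      · rw [show (β + γ) t₁ = (0 : F) by simp only [LinearMap.add_apply, LinearMap.zero_apply, ha1, ha2, ha3, hb1, hb2, hb3, hg1, hg2, hg3, add_zero, zero_add]]
        exact f1a011
      · rw [show (β + γ) t₂ = (1 : F) by simp only [LinearMap.add_apply, LinearMap.zero_apply, ha1, ha2, ha3, hb1, hb2, hb3, hg1, hg2, hg3, add_zero, zero_add]]
        exact f2a011
      · rw [show (β + γ) t₃ = (1 : F) by simp only [LinearMap.add_apply, LinearMap.zero_apply, ha1, ha2, ha3, hb1, hb2, hb3, hg1, hg2, hg3, add_zero, zero_add]]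
        exact f3a011
    have ma111 : a111 ∈ rootSpace t (α + β + γ) := by
      refine EIG (α + β + γ) a111 ?_ ?_ ?_
      · rw [show (α + β + γ) t₁ = (1 : F) by simp only [LinearMap.add_apply, LinearMap.zero_apply, ha1, ha2, ha3, hb1, hb2, hb3, hg1, hg2, hg3, add_zero, zero_add]]
        exact f1a111
      · rw [show (α + β + γ) t₂ = (1 : F) by simp only [LinearMap.add_apply, LinearMap.zero_apply, ha1, ha2, ha3, hb1, hb2, hb3, hg1, hg2, hg3, add_zero, zero_add]]
        exact f2a111
      · rw [show (α + β + γ) t₃ = (1 : F) by simp only [LinearMap.add_apply, LinearMap.zero_apply, ha1, ha2, ha3, hb1, hb2, hb3, hg1, hg2, hg3, add_zero, zero_add]]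
        exact f3a111
    refine ⟨a000, a100, a010, a001, a110, a101, a011, a111, ?_, ma000, ma100, ma010, ma001, ma110, ma101, ma011, ma111⟩
    rw [hx, hs0, hs1, hs00, hs01, hs10, hs11]
    abel
  have SleT : S ≤ t.toSubmodule := by
    rw [hS]
    apply Submodule.span_le.mpr
    intro u hu
    rcases hu with rfl | hu
    · exact t₃.2
    · rw [Set.mem_singleton_iff] at hu
      subst hu
      exact Submodule.add_mem _ t₁.2 t₂.2
  intro x y hy
  set RR : Submodule F g := ⨆ ξ ∈ rootSet t, rootSpace t ξ with hRR
  have RLE : ∀ ξ ∈ rootSet t, rootSpace t ξ ≤ RR := by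
    intro ξ hξ
    rw [hRR]
    exact le_iSup₂ (f := fun ξ _ => rootSpace t ξ) ξ hξ
  have CASE : ∀ lam : Module.Dual F t, (lam = 0 ∨ lam ∈ rootSet t) →
      ∀ v ∈ rootSpace t lam, ⁅v, y⁆ ∈ S ⊔ n ⊔ RR := by
    intro lam hlam v hv
    obtain ⟨z1, hz1, zr, hzr, rfl⟩ := Submodule.mem_sup.mp hy
    obtain ⟨zs, hzs, zn, hzn, rfl⟩ := Submodule.mem_sup.mp hz1
    rw [lie_add, lie_add]
    refine Submodule.add_mem _ (Submodule.add_mem _ ?_ ?_) ?_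
    · have hzt : zs ∈ t.toSubmodule := SleT hzs
      have he : ⁅v, zs⁆ = -(lam ⟨zs, hzt⟩ • v) := by
        rw [← lie_skew, hv ⟨zs, hzt⟩]
      rcases hlam with rfl | hroot
      · rw [he]; simp
      · rw [he]
        exact Submodule.mem_sup_right
          (RLE lam hroot (Submodule.neg_mem _ (Submodule.smul_mem _ _ hv)))
    · rcases hlam with rfl | hroot
      · exact Submodule.mem_sup_left (Submodule.mem_sup_right (hstd v hv zn hzn))
      · have hmm : ⁅v, zn⁆ ∈ rootSpace t lam := by
          rw [memdef]
          intro s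
          have hzn0 : ⁅(s : g), zn⁆ = 0 := (hmem0 zn).mp ((hn zn).mp hzn).1 s
          rw [leibniz_lie, hv s, hzn0, lie_zero, add_zero, smul_lie]
        exact Submodule.mem_sup_right (RLE lam hroot hmm)
    · let adv : g →ₗ[F] g :=
        { toFun := fun w => ⁅v, w⁆
          map_add' := fun a b => lie_add v a b
          map_smul' := fun c w => lie_smul c v w }
      have hle : RR ≤ Submodule.comap adv (S ⊔ n ⊔ RR) := by
        rw [hRR]
        refine iSup₂_le ?_
        intro η hη w hw
        simp only [Submodule.mem_comap]
        have hb := BRACKET lam η v w hv hw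
        show ⁅v, w⁆ ∈ S ⊔ n ⊔ RR
        rcases hlam with rfl | hroot
        · rw [zero_add] at hb
          exact Submodule.mem_sup_right (RLE η hη hb)
        · by_cases hd : lam = η
          · subst hd
            exact Submodule.mem_sup_left (HARD lam hroot v hv w hw)
          · exact Submodule.mem_sup_right (RLE _ (SUMROOT lam η hroot hη hd) hb)
      exact hle hzr
  obtain ⟨y000, y100, y010, y001, y110, y101, y011, y111, hxe,
    m0, m1, m2, m3, m4, m5, m6, m7⟩ := DEC x
  have hroot3 : γ ∈ rootSet t := by rw [hroots]; right; right; left; rfl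
  have hroot4 : α + β ∈ rootSet t := by
    rw [hroots]; right; right; right; left; rfl
  have hroot5 : α + γ ∈ rootSet t := by
    rw [hroots]; right; right; right; right; left; rfl
  have hroot6 : β + γ ∈ rootSet t := by
    rw [hroots]; right; right; right; right; right; left; rfl
  have hroot7 : α + β + γ ∈ rootSet t := by
    rw [hroots]; right; right; right; right; right; right; rfl
  rw [hxe, add_lie, add_lie, add_lie, add_lie, add_lie, add_lie, add_lie]
  exact Submodule.add_mem _ (Submodule.add_mem _ (Submodule.add_mem _
    (Submodule.add_mem _ (Submodule.add_mem _ (Submodule.add_mem _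
    (Submodule.add_mem _ (CASE 0 (Or.inl rfl) y000 m0)
      (CASE α (Or.inr hαr) y100 m1)) (CASE β (Or.inr hβr) y010 m2))
      (CASE γ (Or.inr hroot3) y001 m3)) (CASE (α + β) (Or.inr hroot4) y110 m4))
      (CASE (α + γ) (Or.inr hroot5) y101 m5))
      (CASE (β + γ) (Or.inr hroot6) y011 m6))
      (CASE (α + β + γ) (Or.inr hroot7) y111 m7)
end

section
/- Let g be a centerless Lie 2-algebra with MT(g) = 3, standard maximal torus t with toral basis {t1, t2, t3} and dual basis {α, β, γ} of t*, whose t-root set is Δ = {α, β, γ, α+β, α+γ, β+γ, α+β+γ}. Assume dim(g_α) = dim(g_β) = dim(g_{α+β}) ≥ dim(g_γ) ≥ dim(g_{α+γ}) ≥ dim(g_{β+γ}) > dim(g_{α+β+γ}). Then I := span{t1 + t2, t1 + t3} ⊕ n ⊕ ⊕_{ξ∈Δ} g_ξ is an ideal of g. -/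
section Helpers

variable {F : Type*} [Field F] {g : Type*} [LieRing g] [LieAlgebra F g]

lemma st12_mem_rootSpace {t : LieSubalgebra F g} {lam : Module.Dual F t} {v : g} :
    v ∈ rootSpace t lam ↔ ∀ x : t, ⁅(x : g), v⁆ = lam x • v := Iff.rfl

lemma st12_two (F : Type*) [Field F] [CharP F 2] : (1 : F) + 1 = 0 := by
  have h := CharP.cast_eq_zero F 2
  rw [Nat.cast_ofNat] at h
  rw [one_add_one_eq_two]
  exact_mod_cast h

lemma st12_vv (F : Type*) [Field F] [CharP F 2] {M : Type*} [AddCommGroup M] [Module F M]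
    (v : M) : v + v = 0 := by
  have : ((1 : F) + 1) • v = v + v := by rw [add_smul, one_smul]
  rw [← this, st12_two, zero_smul]

lemma st12_neg (F : Type*) [Field F] [CharP F 2] {M : Type*} [AddCommGroup M] [Module F M]
    (v : M) : -v = v := neg_eq_of_add_eq_zero_left (st12_vv F v)

lemma st12_swap [CharP F 2] (x y : g) : ⁅x, y⁆ = ⁅y, x⁆ := by
  rw [← lie_skew, st12_neg F]

lemma st12_ad_iter (p : g → g) (hp : IsTwoMap F p) (z : g) :
    ∀ (k : ℕ) (v : g), ⁅p^[k] z, v⁆ = (fun u => ⁅z, u⁆)^[2 ^ k] v := by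
  intro k
  induction k with
  | zero => intro v; simp
  | succ k ih =>
    intro v
    rw [Function.iterate_succ_apply', hp.ad_pow, ih, ih, ← Function.iterate_add_apply]
    congr 1
    rw [pow_succ]; ring

lemma st12_nil (p : g → g) (hp : IsTwoMap F p) (z : g) (hz : IsTwoNilpotent p z) :
    ∃ m : ℕ, ∀ v : g, (fun u => ⁅z, u⁆)^[m] v = 0 := by
  obtain ⟨k, hk⟩ := hz
  exact ⟨2 ^ k, fun v => by rw [← st12_ad_iter p hp, hk, zero_lie]⟩

lemma st12_brkt (t : LieSubalgebra F g) (ξ ζ : Module.Dual F t) {x y : g}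
    (hx : x ∈ rootSpace t ξ) (hy : y ∈ rootSpace t ζ) : ⁅x, y⁆ ∈ rootSpace t (ξ + ζ) := by
  intro s
  rw [leibniz_lie, hx s, hy s, lie_smul, smul_lie, LinearMap.add_apply, add_smul]

lemma st12_p_zero (p : g → g) (hp : IsTwoMap F p) : p 0 = 0 := by
  have := hp.smul_pow 0 0
  simpa using this

end Helpers

lemma st12_move (F : Type*) [Field F] [CharP F 2] {M : Type*} [AddCommGroup M] [Module F M]
    {v w : M} (h : v + w = 0) : w = v := by
  have : w = -v := eq_neg_of_add_eq_zero_right h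
  rwa [st12_neg F] at this

section Comm

variable {F : Type*} [Field F] [IsAlgClosed F] [CharP F 2]
  {g : Type*} [LieRing g] [LieAlgebra F g]

lemma st12_comm (p : g → g) (hp : IsTwoMap F p)
    (t : LieSubalgebra F g) (htor : IsTorus F p t)
    (hdimt : Module.finrank F t = 3)
    (s₁ s₂ s₃ : t)
    (hps1 : p (s₁ : g) = (s₁ : g)) (hps2 : p (s₂ : g) = (s₂ : g))
    (hps3 : p (s₃ : g) = (s₃ : g))
    (hspan : Submodule.span F ({s₁, s₂, s₃} : Set t) = ⊤) :
    ⁅(s₁ : g), (s₂ : g)⁆ = 0 := by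
  classical
  -- work inside V := ↥t
  set P : t → t := fun x => ⟨p (x : g), htor.1 _ x.2⟩ with hPdef
  have hPcoe : ∀ x : t, (P x : g) = p (x : g) := fun x => rfl
  have hPadd : ∀ x y : t, P (x + y) = P x + P y + ⁅x, y⁆ := by
    intro x y
    apply Subtype.ext
    show p ((x : g) + (y : g)) = p (x : g) + p (y : g) + ⁅(x : g), (y : g)⁆
    exact hp.add_pow _ _
  have hPsmul : ∀ (c : F) (x : t), P (c • x) = (c ^ 2) • P x := by
    intro c x
    apply Subtype.ext
    show p (c • (x : g)) = (c ^ 2) • p (x : g)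
    exact hp.smul_pow c x
  have hPad : ∀ x y : t, ⁅P x, y⁆ = ⁅x, ⁅x, y⁆⁆ := by
    intro x y
    apply Subtype.ext
    show ⁅p (x : g), (y : g)⁆ = ⁅(x : g), ⁅(x : g), (y : g)⁆⁆
    exact hp.ad_pow _ _
  have hP0 : P 0 = 0 := by
    apply Subtype.ext
    show p ((0 : t) : g) = ((0 : t) : g)
    rw [ZeroMemClass.coe_zero]
    exact st12_p_zero p hp
  have hPinj : Function.Injective P := by
    intro x y hxy
    apply Subtype.ext
    exact htor.2.injOn x.2 y.2 (congrArg (Subtype.val) hxy)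
  have hP1 : P s₁ = s₁ := Subtype.ext hps1
  have hP2 : P s₂ = s₂ := Subtype.ext hps2
  have hP3 : P s₃ = s₃ := Subtype.ext hps3
  -- basis
  have hrange : Set.range ![s₁, s₂, s₃] = {s₁, s₂, s₃} := by
    ext v
    constructor
    · rintro ⟨i, rfl⟩
      fin_cases i <;> simp
    · rintro (rfl | rfl | rfl)
      exacts [⟨0, rfl⟩, ⟨1, rfl⟩, ⟨2, rfl⟩]
  have hle : ⊤ ≤ Submodule.span F (Set.range ![s₁, s₂, s₃]) := by
    rw [hrange, hspan]
  have hcard : Fintype.card (Fin 3) = Module.finrank F t := by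
    rw [Fintype.card_fin, hdimt]
  set bb : Module.Basis (Fin 3) F t := basisOfTopLeSpanOfCardEqFinrank ![s₁, s₂, s₃] hle hcard
    with hbbdef
  have hb : ⇑bb = ![s₁, s₂, s₃] := coe_basisOfTopLeSpanOfCardEqFinrank _ _ _
  have hb0 : bb 0 = s₁ := by rw [hb]; rfl
  have hb1 : bb 1 = s₂ := by rw [hb]; rfl
  have hb2 : bb 2 = s₃ := by rw [hb]; rfl
  have hrep : ∀ v : t, v = bb.repr v 0 • s₁ + bb.repr v 1 • s₂ + bb.repr v 2 • s₃ := by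
    intro v
    have h := bb.sum_repr v
    rw [Fin.sum_univ_three, hb0, hb1, hb2] at h
    exact h.symm
  -- main objects
  set z : t := ⁅s₁, s₂⁆ with hzdef
  set w : t := ⁅s₁, s₃⁆ with hwdef
  set u : t := ⁅s₂, s₃⁆ with hudef
  suffices hz0 : z = 0 by
    rw [hzdef] at hz0
    have h := congrArg (fun v : t => (v : g)) hz0
    simpa [LieSubalgebra.coe_bracket] using h
  have hswap : ∀ x y : t, ⁅x, y⁆ = ⁅y, x⁆ := fun x y => st12_swap (F := F) x y
  have e1 : ⁅s₁, z⁆ = z := by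
    have h := hPad s₁ s₂
    rw [hP1] at h
    exact h.symm
  have e2 : ⁅s₂, z⁆ = z := by
    have h := hPad s₂ s₁
    rw [hP2, hswap s₂ s₁, ← hzdef] at h
    exact h.symm
  have e3 : ⁅s₁, w⁆ = w := by
    have h := hPad s₁ s₃
    rw [hP1] at h
    exact h.symm
  have e4 : ⁅s₃, w⁆ = w := by
    have h := hPad s₃ s₁
    rw [hP3, hswap s₃ s₁, ← hwdef] at h
    exact h.symm
  have e5 : ⁅s₂, u⁆ = u := by
    have h := hPad s₂ s₃
    rw [hP2] at h
    exact h.symm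
  have e6 : ⁅s₃, u⁆ = u := by
    have h := hPad s₃ s₂
    rw [hP3, hswap s₃ s₂, ← hudef] at h
    exact h.symm
  by_contra hz
  set a1 : F := bb.repr z 0 with ha1def
  set a2 : F := bb.repr z 1 with ha2def
  set a3 : F := bb.repr z 2 with ha3def
  have hzr : z = a1 • s₁ + a2 • s₂ + a3 • s₃ := hrep z
  have hs21 : ⁅s₂, s₁⁆ = z := by rw [hswap s₂ s₁]
  have hs31 : ⁅s₃, s₁⁆ = w := by rw [hswap s₃ s₁]
  have hs32 : ⁅s₃, s₂⁆ = u := by rw [hswap s₃ s₂]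
  have eqA : z = a2 • z + a3 • w := by
    conv_lhs => rw [← e1]
    conv_lhs => rw [hzr]
    rw [lie_add, lie_add, lie_smul, lie_smul, lie_smul, lie_self, smul_zero, zero_add]
  have eqB : z = a1 • z + a3 • u := by
    conv_lhs => rw [← e2]
    conv_lhs => rw [hzr]
    rw [lie_add, lie_add, lie_smul, lie_smul, lie_smul, lie_self, hs21, smul_zero, add_zero]
  have hcw : a3 • w = (1 + a2) • z := by
    have h1 : z + a2 • z = (a2 • z + a3 • w) + a2 • z := by rw [← eqA]
    rw [add_smul, one_smul, h1, add_comm (a2 • z) (a3 • w), add_assoc, st12_vv F, add_zero]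
  have hcu : a3 • u = (1 + a1) • z := by
    have h1 : z + a1 • z = (a1 • z + a3 • u) + a1 • z := by rw [← eqB]
    rw [add_smul, one_smul, h1, add_comm (a1 • z) (a3 • u), add_assoc, st12_vv F, add_zero]
  have hsolve : ∀ x y : F, 1 + x = 0 → x = 1 := by
    intro x y h
    have : x = -1 := eq_neg_of_add_eq_zero_right h
    rw [this, st12_neg F]
  by_cases hc : a3 = 0
  · -- z = s₁ + s₂, p z = 0, contradiction
    rw [hc, zero_smul] at hcw hcu
    have ha2 : a2 = 1 := hsolve a2 0 (by
      rcases smul_eq_zero.mp hcw.symm with h | h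
      · exact h
      · exact absurd h hz)
    have ha1 : a1 = 1 := hsolve a1 0 (by
      rcases smul_eq_zero.mp hcu.symm with h | h
      · exact h
      · exact absurd h hz)
    have hz12 : z = s₁ + s₂ := by
      rw [hzr, ha1, ha2, hc, one_smul, one_smul, zero_smul, add_zero]
    have hps : P (s₁ + s₂) = 0 := by
      rw [hPadd, hP1, hP2, ← hzdef, ← hz12, hz12, st12_vv F]
    have : s₁ + s₂ = 0 := hPinj (by rw [hps, hP0])
    rw [hz12, this] at hz
    exact hz rfl
  · -- a3 ≠ 0
    set lam : F := a3⁻¹ * (1 + a2) with hlamdef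
    set mu : F := a3⁻¹ * (1 + a1) with hmudef
    have hwz : w = lam • z := by
      rw [hlamdef, mul_smul, ← hcw, ← mul_smul, inv_mul_cancel₀ hc, one_smul]
    have huz : u = mu • z := by
      rw [hmudef, mul_smul, ← hcu, ← mul_smul, inv_mul_cancel₀ hc, one_smul]
    -- every bracket is a multiple of z
    have hbr1 : ∀ v : t, ∃ e : F, ⁅s₁, v⁆ = e • z := by
      intro v
      refine ⟨bb.repr v 1 + bb.repr v 2 * lam, ?_⟩
      conv_lhs => rw [hrep v]
      rw [lie_add, lie_add, lie_smul, lie_smul, lie_smul, lie_self, ← hzdef, ← hwdef, hwz]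
      module
    have hbr2 : ∀ v : t, ∃ e : F, ⁅s₂, v⁆ = e • z := by
      intro v
      refine ⟨bb.repr v 0 + bb.repr v 2 * mu, ?_⟩
      conv_lhs => rw [hrep v]
      rw [lie_add, lie_add, lie_smul, lie_smul, lie_smul, lie_self, hs21, ← hudef, huz]
      module
    have hbr3 : ∀ v : t, ∃ e : F, ⁅s₃, v⁆ = e • z := by
      intro v
      refine ⟨bb.repr v 0 * lam + bb.repr v 1 * mu, ?_⟩
      conv_lhs => rw [hrep v]
      rw [lie_add, lie_add, lie_smul, lie_smul, lie_smul, lie_self, hs31, hs32, hwz, huz]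
      module
    have hbrall : ∀ v v' : t, ∃ e : F, ⁅v, v'⁆ = e • z := by
      intro v v'
      obtain ⟨e1', he1⟩ := hbr1 v'
      obtain ⟨e2', he2⟩ := hbr2 v'
      obtain ⟨e3', he3⟩ := hbr3 v'
      refine ⟨bb.repr v 0 * e1' + bb.repr v 1 * e2' + bb.repr v 2 * e3', ?_⟩
      conv_lhs => rw [hrep v]
      rw [add_lie, add_lie, smul_lie, smul_lie, smul_lie, he1, he2, he3]
      module
    set y0 : t := s₁ + s₂ with hy0def
    have hzy0 : ⁅z, y0⁆ = 0 := by
      rw [hy0def, lie_add, hswap z s₁, hswap z s₂, e1, e2, st12_vv F]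
    have hc1 : ∀ v : t, ⁅P z, v⁆ = 0 := by
      intro v
      rw [hPad]
      obtain ⟨e, he⟩ := hbrall z v
      rw [he, lie_smul, lie_self, smul_zero]
    have hc2 : ∀ v : t, ⁅P y0, v⁆ = 0 := by
      intro v
      rw [hPad]
      obtain ⟨e, he⟩ := hbrall y0 v
      rw [he, lie_smul, hswap y0 z, hzy0, smul_zero]
    set r0 : t := mu • s₁ + lam • s₂ + s₃ with hr0def
    have hchar2eq : ∀ x y : F, x + y = 0 → x = y := by
      intro x y h
      have : x = -y := eq_neg_of_add_eq_zero_left h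
      rw [this, st12_neg F]
    have hZ : ∀ v : t, (∀ v' : t, ⁅v, v'⁆ = 0) → ∃ ρ : F, v = ρ • r0 := by
      intro v hv
      have h1' : ⁅v, s₁⁆ = (bb.repr v 1 + bb.repr v 2 * lam) • z := by
        conv_lhs => rw [hrep v]
        rw [add_lie, add_lie, smul_lie, smul_lie, smul_lie, lie_self, hs21, hs31, hwz]
        module
      have h2' : ⁅v, s₂⁆ = (bb.repr v 0 + bb.repr v 2 * mu) • z := by
        conv_lhs => rw [hrep v]
        rw [add_lie, add_lie, smul_lie, smul_lie, smul_lie, lie_self, ← hzdef, hs32, huz]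
        module
      rw [hv s₁] at h1'
      rw [hv s₂] at h2'
      rcases smul_eq_zero.mp h1'.symm with h | h
      swap
      · exact absurd h hz
      rcases smul_eq_zero.mp h2'.symm with h' | h'
      swap
      · exact absurd h' hz
      have hr2 : bb.repr v 1 = bb.repr v 2 * lam := hchar2eq _ _ h
      have hr1 : bb.repr v 0 = bb.repr v 2 * mu := hchar2eq _ _ h'
      refine ⟨bb.repr v 2, ?_⟩
      conv_lhs => rw [hrep v]
      rw [hr1, hr2, hr0def]
      module
    obtain ⟨ρ, hρ⟩ := hZ (P z) hc1
    obtain ⟨σ, hσ⟩ := hZ (P y0) hc2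
    have hρ0 : ρ ≠ 0 := by
      intro h
      rw [h, zero_smul] at hρ
      have : z = 0 := hPinj (by rw [hρ, hP0])
      exact hz this
    have hσ0 : σ ≠ 0 := by
      intro h
      rw [h, zero_smul] at hσ
      have hy00 : y0 = 0 := hPinj (by rw [hσ, hP0])
      have : s₁ = s₂ := by
        have h12 : s₁ + s₂ = 0 := hy00
        have : s₁ = -s₂ := eq_neg_of_add_eq_zero_left h12
        rw [this, st12_neg F]
      have h01 : bb 0 = bb 1 := by rw [hb0, hb1, this]
      have := bb.injective h01
      simp at this
    obtain ⟨θ, hθ⟩ := IsAlgClosed.exists_pow_nat_eq (σ / ρ) (n := 2) (by norm_num)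
    have hθ0 : θ ≠ 0 := by
      intro h
      rw [h] at hθ
      have : σ / ρ = 0 := by rw [← hθ]; ring
      rcases div_eq_zero_iff.mp this with h' | h'
      · exact hσ0 h'
      · exact hρ0 h'
    have hcol : P (θ • z) = P y0 := by
      rw [hPsmul, hρ, hσ, hθ, smul_smul, div_mul_cancel₀ σ hρ0]
    have heq : θ • z = y0 := hPinj hcol
    have hz' : z = θ⁻¹ • s₁ + θ⁻¹ • s₂ := by
      have : z = θ⁻¹ • (θ • z) := (inv_smul_smul₀ hθ0 z).symm
      rw [this, heq, hy0def, smul_add]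
    have ha3 : a3 = 0 := by
      rw [ha3def]
      nth_rewrite 1 [hz']
      rw [← hb0, ← hb1, map_add, map_smul, map_smul]
      simp [Module.Basis.repr_self]
    exact hc ha3

end Comm

set_option maxHeartbeats 1600000 in
/-- Case A with `dim g_{β+γ} > dim g_{α+β+γ}`:
`span{t1 + t2, t1 + t3} ⊕ n ⊕ ⊕_{ξ∈Δ} g_ξ` is an ideal of `g`. -/
theorem statement12
    {F : Type*} [Field F] [IsAlgClosed F] [CharP F 2]
    {g : Type*} [LieRing g] [LieAlgebra F g] [FiniteDimensional F g]
    (p : g → g) (hp : IsTwoMap F p)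
    (hcenter : LieAlgebra.center F g = ⊥)
    (t : LieSubalgebra F g) (hmax : IsMaxTorus F p t)
    (n : Submodule F g)
    (hn : ∀ x : g, x ∈ n ↔ x ∈ rootSpace t 0 ∧ IsTwoNilpotent p x)
    (hstd : ∀ x ∈ rootSpace t 0, ∀ y ∈ n, ⁅x, y⁆ ∈ n)
    (hdecomp : rootSpace t 0 = t.toSubmodule ⊔ n)
    (hdisj : Disjoint t.toSubmodule n)
    (hrank : ∀ s : LieSubalgebra F g, IsTorus F p s → Module.finrank F s ≤ 3)
    (hdimt : Module.finrank F t = 3)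
    (t₁ t₂ t₃ : t)
    (htor1 : p (t₁ : g) = (t₁ : g)) (htor2 : p (t₂ : g) = (t₂ : g))
    (htor3 : p (t₃ : g) = (t₃ : g))
    (hspan : Submodule.span F ({t₁, t₂, t₃} : Set t) = ⊤)
    (α β γ : Module.Dual F t)
    (hα : α t₁ = 1 ∧ α t₂ = 0 ∧ α t₃ = 0)
    (hβ : β t₁ = 0 ∧ β t₂ = 1 ∧ β t₃ = 0)
    (hγ : γ t₁ = 0 ∧ γ t₂ = 0 ∧ γ t₃ = 1)
    (hroots : rootSet t = ({α, β, γ, α + β, α + γ, β + γ, α + β + γ} :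
      Set (Module.Dual F t)))
    (h1 : Module.finrank F (rootSpace t α) = Module.finrank F (rootSpace t β))
    (h2 : Module.finrank F (rootSpace t β) = Module.finrank F (rootSpace t (α + β)))
    (h3 : Module.finrank F (rootSpace t γ) ≤ Module.finrank F (rootSpace t (α + β)))
    (h4 : Module.finrank F (rootSpace t (α + γ)) ≤ Module.finrank F (rootSpace t γ))
    (h5 : Module.finrank F (rootSpace t (β + γ)) ≤ Module.finrank F (rootSpace t (α + γ)))
    (h6 : Module.finrank F (rootSpace t (α + β + γ)) <
      Module.finrank F (rootSpace t (β + γ))) :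
    ∀ x y : g,
      y ∈ Submodule.span F ({(t₁ : g) + (t₂ : g), (t₁ : g) + (t₃ : g)} : Set g) ⊔ n ⊔
          (⨆ ξ ∈ rootSet t, rootSpace t ξ) →
      ⁅x, y⁆ ∈ Submodule.span F ({(t₁ : g) + (t₂ : g), (t₁ : g) + (t₃ : g)} : Set g) ⊔ n ⊔
          (⨆ ξ ∈ rootSet t, rootSpace t ξ) := by
  classical
  have htor := hmax.1
  have h2F := st12_two F
  have h2g : ∀ v : g, v + v = 0 := fun v => st12_vv F v
  have hswap : ∀ v w : g, ⁅v, w⁆ = ⁅w, v⁆ := fun v w => st12_swap (F := F) v w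
  have hdual2 : ∀ μ : Module.Dual F t, μ + μ = 0 := fun μ => st12_vv F μ
  -- commutativity of t
  have hspan' : Submodule.span F ({t₁, t₃, t₂} : Set t) = ⊤ := by
    rw [Set.pair_comm t₃ t₂]; exact hspan
  have hspan'' : Submodule.span F ({t₂, t₃, t₁} : Set t) = ⊤ := by
    rw [show ({t₂, t₃, t₁} : Set t) = {t₁, t₂, t₃} from by ext a; simp; tauto]; exact hspan
  have hc12 : ⁅(t₁ : g), (t₂ : g)⁆ = 0 :=
    st12_comm p hp t htor hdimt t₁ t₂ t₃ htor1 htor2 htor3 hspan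
  have hc13 : ⁅(t₁ : g), (t₃ : g)⁆ = 0 :=
    st12_comm p hp t htor hdimt t₁ t₃ t₂ htor1 htor3 htor2 hspan'
  have hc23 : ⁅(t₂ : g), (t₃ : g)⁆ = 0 :=
    st12_comm p hp t htor hdimt t₂ t₃ t₁ htor2 htor3 htor1 hspan''
  have hmemspan : ∀ a : t, a ∈ Submodule.span F ({t₁, t₂, t₃} : Set t) := by
    intro a; rw [hspan]; exact Submodule.mem_top
  have habel : ∀ a b : t, ⁅(a : g), (b : g)⁆ = 0 := by
    have hgenb : ∀ a : t, a ∈ ({t₁, t₂, t₃} : Set t) → ∀ b : t, ⁅(a : g), (b : g)⁆ = 0 := by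
      intro a ha b
      have hb := hmemspan b
      induction hb using Submodule.span_induction with
      | mem c hc =>
        simp only [Set.mem_insert_iff, Set.mem_singleton_iff] at ha hc
        rcases ha with rfl | rfl | rfl <;> rcases hc with rfl | rfl | rfl <;>
          first
            | exact lie_self _
            | exact hc12
            | exact hc13
            | exact hc23
            | (rw [hswap]; first | exact hc12 | exact hc13 | exact hc23)
      | zero => simp
      | add x y _ _ ihx ihy =>
        rw [show ((x + y : t) : g) = (x : g) + (y : g) from rfl, lie_add, ihx, ihy, add_zero]
      | smul c x _ ih =>
        rw [show ((c • x : t) : g) = c • (x : g) from rfl, lie_smul, ih, smul_zero]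
    intro a b
    have ha := hmemspan a
    induction ha using Submodule.span_induction with
    | mem c hc => exact hgenb c hc b
    | zero => simp
    | add x y _ _ ihx ihy =>
      rw [show ((x + y : t) : g) = (x : g) + (y : g) from rfl, add_lie, ihx, ihy, add_zero]
    | smul c x _ ih =>
      rw [show ((c • x : t) : g) = c • (x : g) from rfl, smul_lie, ih, smul_zero]
  -- t is inside the zero root space
  have ht0 : ∀ a : t, (a : g) ∈ rootSpace t 0 := by
    intro a
    refine st12_mem_rootSpace.mpr fun x => ?_
    rw [habel x a, LinearMap.zero_apply, zero_smul]
  have hH0 : ∀ (s0 : g), s0 ∈ t → ∀ u ∈ rootSpace t 0, ⁅s0, u⁆ = 0 := by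
    intro s0 hs0 u hu
    have := st12_mem_rootSpace.mp hu ⟨s0, hs0⟩
    simpa using this
  -- functional extensionality via values on the basis
  have hext : ∀ μ ν : Module.Dual F t, μ t₁ = ν t₁ → μ t₂ = ν t₂ → μ t₃ = ν t₃ → μ = ν := by
    intro μ ν e1 e2 e3
    apply LinearMap.ext
    intro a
    have ha := hmemspan a
    induction ha using Submodule.span_induction with
    | mem c hc =>
      simp only [Set.mem_insert_iff, Set.mem_singleton_iff] at hc
      rcases hc with rfl | rfl | rfl <;> assumption
    | zero => simp
    | add x y _ _ ihx ihy => rw [map_add, map_add, ihx, ihy]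
    | smul c x _ ih => rw [map_smul, map_smul, ih]
  -- p of a root vector lies in the zero root space
  have hpx_mem : ∀ (ξ : Module.Dual F t) (x : g), x ∈ rootSpace t ξ → p x ∈ rootSpace t 0 := by
    intro ξ x hx
    refine st12_mem_rootSpace.mpr fun a => ?_
    rw [hswap, hp.ad_pow, hswap x (a : g), hx a, lie_smul, lie_self, smul_zero,
      LinearMap.zero_apply, zero_smul]
  -- the crucial claim: for a root vector x in g_xi, the t-part of p x is killed by tau
  have key : ∀ (ξ : Module.Dual F t), ξ ∈ rootSet t → ∀ x ∈ rootSpace t ξ,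
      ∀ (s0 n0 : g) (hs0 : s0 ∈ t), n0 ∈ n → p x = s0 + n0 →
      (α + β + γ) ⟨s0, hs0⟩ = 0 := by
    intro ξ hξ x hx s0 n0 hs0 hn0 hps
    obtain ⟨hn0H, hn0nil⟩ := (hn n0).mp hn0
    obtain ⟨m, hm⟩ := st12_nil p hp n0 hn0nil
    have hm1 : ∀ w : g, (fun u => ⁅n0, u⁆)^[m + 1] w = 0 := fun w => by
      rw [Function.iterate_succ_apply]; exact hm _
    have hact : ∀ (μ : Module.Dual F t) (v : g), v ∈ rootSpace t μ →
        ⁅p x, v⁆ = μ ⟨s0, hs0⟩ • v + ⁅n0, v⁆ := by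
      intro μ v hv
      rw [hps, add_lie, hv ⟨s0, hs0⟩]
    have hfX : ∀ u : g, ⁅p x, ⁅x, u⁆⁆ = ⁅x, ⁅p x, u⁆⁆ := by
      intro u
      rw [leibniz_lie, show ⁅p x, x⁆ = 0 from by rw [hp.ad_pow, lie_self, lie_zero],
        zero_lie, zero_add]
    have hfXk : ∀ (k : ℕ) (u : g),
        (fun w => ⁅p x, w⁆)^[k] ⁅x, u⁆ = ⁅x, (fun w => ⁅p x, w⁆)^[k] u⁆ := by
      intro k
      induction k with
      | zero => intro u; simp
      | succ k ih =>
        intro u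
        rw [Function.iterate_succ_apply, Function.iterate_succ_apply, hfX, ih]
    have hfH : ∀ (k : ℕ) (u : g), u ∈ rootSpace t 0 →
        (fun w => ⁅p x, w⁆)^[k] u = (fun w => ⁅n0, w⁆)^[k] u := by
      intro k
      induction k with
      | zero => intro u _; rfl
      | succ k ih =>
        intro u hu
        rw [Function.iterate_succ_apply, Function.iterate_succ_apply]
        have h0 : ⁅p x, u⁆ = ⁅n0, u⁆ := by
          rw [hps, add_lie, hH0 s0 hs0 u hu, zero_add]
        rw [h0]
        refine ih _ ?_
        have := st12_brkt t 0 0 hn0H hu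
        rwa [zero_add] at this
    have hnilξ : ∀ v ∈ rootSpace t ξ, (fun w => ⁅p x, w⁆)^[m + 1] v = 0 := by
      intro v hv
      rw [Function.iterate_succ_apply]
      have hxv : ⁅x, v⁆ ∈ rootSpace t 0 := by
        have := st12_brkt t ξ ξ hx hv
        rwa [hdual2 ξ] at this
      rw [hp.ad_pow x v, hfXk m, hfH m _ hxv, hm, lie_zero]
    have hcξ : ξ ⟨s0, hs0⟩ = 0 := by
      obtain ⟨v0, hv0U, hv0⟩ := Submodule.exists_mem_ne_zero_of_ne_bot hξ.2
      have hNex : ∃ k, (fun w => ⁅n0, w⁆)^[k] v0 = 0 := ⟨m, hm v0⟩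
      have hK0 : Nat.find hNex ≠ 0 := by
        intro h
        have h' := Nat.find_spec hNex
        rw [h] at h'
        exact hv0 h'
      have hv1ne : (fun w => ⁅n0, w⁆)^[Nat.find hNex - 1] v0 ≠ 0 :=
        Nat.find_min hNex (Nat.sub_lt (Nat.pos_of_ne_zero hK0) one_pos)
      have hNv1 : ⁅n0, (fun w => ⁅n0, w⁆)^[Nat.find hNex - 1] v0⁆ = 0 := by
        have h' := Nat.find_spec hNex
        rw [show Nat.find hNex = (Nat.find hNex - 1) + 1 from
          (Nat.succ_pred_eq_of_pos (Nat.pos_of_ne_zero hK0)).symm,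
          Function.iterate_succ_apply'] at h'
        exact h'
      set v1 : g := (fun w => ⁅n0, w⁆)^[Nat.find hNex - 1] v0 with hv1def
      have hv1U : v1 ∈ rootSpace t ξ := by
        rw [hv1def]
        generalize Nat.find hNex - 1 = k
        induction k with
        | zero => exact hv0U
        | succ k ih =>
          rw [Function.iterate_succ_apply']
          have := st12_brkt t 0 ξ hn0H ih
          rwa [zero_add] at this
      have hfv1 : ⁅p x, v1⁆ = ξ ⟨s0, hs0⟩ • v1 := by
        rw [hact ξ v1 hv1U, hNv1, add_zero]
      have hit : ∀ k : ℕ, (fun w => ⁅p x, w⁆)^[k] v1 = (ξ ⟨s0, hs0⟩) ^ k • v1 := by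
        intro k
        induction k with
        | zero => simp
        | succ k ih =>
          rw [Function.iterate_succ_apply', ih, lie_smul, hfv1, smul_smul, ← pow_succ]
      have hz := hnilξ v1 hv1U
      rw [hit (m + 1)] at hz
      rcases smul_eq_zero.mp hz with h | h
      · exact pow_eq_zero_iff (Nat.succ_ne_zero m) |>.mp h
      · exact absurd h hv1ne
    by_cases hξτ : ξ = α + β + γ
    · rw [← hξτ]; exact hcξ
    by_contra hτv
    have hcη : ((α + β + γ) + ξ) ⟨s0, hs0⟩ ≠ 0 := by
      rw [LinearMap.add_apply, hcξ, add_zero]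
      exact hτv
    have hmemτ : ∀ v ∈ rootSpace t ((α + β + γ) + ξ), ⁅x, v⁆ ∈ rootSpace t (α + β + γ) := by
      intro v hv
      have hb := st12_brkt t ξ ((α + β + γ) + ξ) hx hv
      have heq : ξ + ((α + β + γ) + ξ) = α + β + γ := by
        rw [add_comm (α + β + γ) ξ, ← add_assoc, hdual2 ξ, zero_add]
      rwa [heq] at hb
    have hinj0 : ∀ v ∈ rootSpace t ((α + β + γ) + ξ), ⁅x, v⁆ = 0 → v = 0 := by
      intro v hv hxv
      have hfv : ⁅p x, v⁆ = 0 := by rw [hp.ad_pow, hxv, lie_zero]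
      have h0 : ((α + β + γ) + ξ) ⟨s0, hs0⟩ • v + ⁅n0, v⁆ = 0 := by
        rw [← hact _ v hv, hfv]
      have hNv : ⁅n0, v⁆ = ((α + β + γ) + ξ) ⟨s0, hs0⟩ • v := st12_move F h0
      have hNk : ∀ k : ℕ, (fun w => ⁅n0, w⁆)^[k] v = (((α + β + γ) + ξ) ⟨s0, hs0⟩) ^ k • v := by
        intro k
        induction k with
        | zero => simp
        | succ k ih =>
          rw [Function.iterate_succ_apply', ih, lie_smul, hNv, smul_smul, ← pow_succ]
      have h0' := hm1 v
      rw [hNk (m + 1)] at h0'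
      rcases smul_eq_zero.mp h0' with h | h
      · exact absurd (pow_eq_zero_iff (Nat.succ_ne_zero m) |>.mp h) hcη
      · exact h
    let Φ : ↥(rootSpace t ((α + β + γ) + ξ)) →ₗ[F] ↥(rootSpace t (α + β + γ)) :=
      { toFun := fun v => ⟨⁅x, (v : g)⁆, hmemτ v v.2⟩
        map_add' := by intro v w; apply Subtype.ext; simp [lie_add]
        map_smul' := by intro c v; apply Subtype.ext; simp [lie_smul] }
    have hΦinj : Function.Injective Φ := by
      rw [← LinearMap.ker_eq_bot (M := ↥(rootSpace t ((α + β + γ) + ξ)))]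
      rw [LinearMap.ker_eq_bot']
      intro v hv
      have hx0 : ⁅x, (v : g)⁆ = 0 := congrArg Subtype.val hv
      exact Subtype.ext (hinj0 v v.2 hx0)
    have hle := LinearMap.finrank_le_finrank_of_injective hΦinj
    -- identify (α+β+γ)+ξ as one of the six other roots and contradict the dimension chain
    have hξset : ξ ∈ ({α, β, γ, α + β, α + γ, β + γ, α + β + γ} :
        Set (Module.Dual F t)) := by
      rw [← hroots]; exact hξ
    simp only [Set.mem_insert_iff, Set.mem_singleton_iff] at hξset
    have hval : ∀ (ξ' ν : Module.Dual F t),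
        ((α + β + γ) + ξ') t₁ = ν t₁ → ((α + β + γ) + ξ') t₂ = ν t₂ →
        ((α + β + γ) + ξ') t₃ = ν t₃ → (α + β + γ) + ξ' = ν := fun ξ' ν => hext _ ν
    rcases hξset with h | h | h | h | h | h | h
    · have he : (α + β + γ) + ξ = β + γ := by
        rw [h]
        apply hext <;> simp only [LinearMap.add_apply] <;>
          simp only [hα.1, hα.2.1, hα.2.2, hβ.1, hβ.2.1, hβ.2.2, hγ.1, hγ.2.1, hγ.2.2] <;>
          first
            | ring1
            | linear_combination st12_two F
            | linear_combination 2 * st12_two F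
      rw [he] at hle
      exact absurd hle (not_le.mpr h6)
    · have he : (α + β + γ) + ξ = α + γ := by
        rw [h]
        apply hext <;> simp only [LinearMap.add_apply] <;>
          simp only [hα.1, hα.2.1, hα.2.2, hβ.1, hβ.2.1, hβ.2.2, hγ.1, hγ.2.1, hγ.2.2] <;>
          first
            | ring1
            | linear_combination st12_two F
            | linear_combination 2 * st12_two F
      rw [he] at hle
      exact absurd hle (not_le.mpr (lt_of_lt_of_le h6 h5))
    · have he : (α + β + γ) + ξ = α + β := by
        rw [h]
        apply hext <;> simp only [LinearMap.add_apply] <;>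
          simp only [hα.1, hα.2.1, hα.2.2, hβ.1, hβ.2.1, hβ.2.2, hγ.1, hγ.2.1, hγ.2.2] <;>
          first
            | ring1
            | linear_combination st12_two F
            | linear_combination 2 * st12_two F
      rw [he] at hle
      exact absurd hle (not_le.mpr
        (lt_of_lt_of_le (lt_of_lt_of_le (lt_of_lt_of_le h6 h5) h4) h3))
    · have he : (α + β + γ) + ξ = γ := by
        rw [h]
        apply hext <;> simp only [LinearMap.add_apply] <;>
          simp only [hα.1, hα.2.1, hα.2.2, hβ.1, hβ.2.1, hβ.2.2, hγ.1, hγ.2.1, hγ.2.2] <;>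
          first
            | ring1
            | linear_combination st12_two F
            | linear_combination 2 * st12_two F
      rw [he] at hle
      exact absurd hle (not_le.mpr (lt_of_lt_of_le (lt_of_lt_of_le h6 h5) h4))
    · have he : (α + β + γ) + ξ = β := by
        rw [h]
        apply hext <;> simp only [LinearMap.add_apply] <;>
          simp only [hα.1, hα.2.1, hα.2.2, hβ.1, hβ.2.1, hβ.2.2, hγ.1, hγ.2.1, hγ.2.2] <;>
          first
            | ring1
            | linear_combination st12_two F
            | linear_combination 2 * st12_two F
      rw [he] at hle
      have hlt : Module.finrank F (rootSpace t (α + β + γ)) <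
          Module.finrank F (rootSpace t β) := by
        rw [h2]
        exact lt_of_lt_of_le (lt_of_lt_of_le (lt_of_lt_of_le h6 h5) h4) h3
      exact absurd hle (not_le.mpr hlt)
    · have he : (α + β + γ) + ξ = α := by
        rw [h]
        apply hext <;> simp only [LinearMap.add_apply] <;>
          simp only [hα.1, hα.2.1, hα.2.2, hβ.1, hβ.2.1, hβ.2.2, hγ.1, hγ.2.1, hγ.2.2] <;>
          first
            | ring1
            | linear_combination st12_two F
            | linear_combination 2 * st12_two F
      rw [he] at hle
      have hlt : Module.finrank F (rootSpace t (α + β + γ)) <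
          Module.finrank F (rootSpace t α) := by
        rw [h1, h2]
        exact lt_of_lt_of_le (lt_of_lt_of_le (lt_of_lt_of_le h6 h5) h4) h3
      exact absurd hle (not_le.mpr hlt)
    · exact absurd h hξτ
  -- basis of t at the outer level
  have hrange : Set.range ![t₁, t₂, t₃] = {t₁, t₂, t₃} := by
    ext v
    constructor
    · rintro ⟨i, rfl⟩
      fin_cases i <;> simp
    · rintro (rfl | rfl | rfl)
      exacts [⟨0, rfl⟩, ⟨1, rfl⟩, ⟨2, rfl⟩]
  have hle3 : ⊤ ≤ Submodule.span F (Set.range ![t₁, t₂, t₃]) := by rw [hrange, hspan]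
  have hcard : Fintype.card (Fin 3) = Module.finrank F t := by rw [Fintype.card_fin, hdimt]
  set bb : Module.Basis (Fin 3) F t := basisOfTopLeSpanOfCardEqFinrank ![t₁, t₂, t₃] hle3 hcard
    with hbbdef
  have hbb : ⇑bb = ![t₁, t₂, t₃] := coe_basisOfTopLeSpanOfCardEqFinrank _ _ _
  have hbb0 : bb 0 = t₁ := by rw [hbb]; rfl
  have hbb1 : bb 1 = t₂ := by rw [hbb]; rfl
  have hbb2 : bb 2 = t₃ := by rw [hbb]; rfl
  have hrept : ∀ v : t, v = bb.repr v 0 • t₁ + bb.repr v 1 • t₂ + bb.repr v 2 • t₃ := by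
    intro v
    have h := bb.sum_repr v
    rw [Fin.sum_univ_three, hbb0, hbb1, hbb2] at h
    exact h.symm
  -- elements of t with zero τ-value lie in the span S
  have hSsub : ∀ (a : g) (ha : a ∈ t), (α + β + γ) ⟨a, ha⟩ = 0 →
      a ∈ Submodule.span F ({(t₁ : g) + (t₂ : g), (t₁ : g) + (t₃ : g)} : Set g) := by
    intro a ha hτa
    set a' : t := ⟨a, ha⟩ with ha'def
    have hco := hrept a'
    have hval : (α + β + γ) a' = bb.repr a' 0 + bb.repr a' 1 + bb.repr a' 2 := by
      conv_lhs => rw [hco]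
      simp only [map_add, map_smul, LinearMap.add_apply, smul_eq_mul]
      rw [hα.1, hα.2.1, hα.2.2, hβ.1, hβ.2.1, hβ.2.2, hγ.1, hγ.2.1, hγ.2.2]
      ring
    have hsum : bb.repr a' 0 + bb.repr a' 1 + bb.repr a' 2 = 0 := by rw [← hval, hτa]
    have hco2 : bb.repr a' 2 = bb.repr a' 0 + bb.repr a' 1 := st12_move F hsum
    have hcoe : a = bb.repr a' 0 • (t₁ : g) + bb.repr a' 1 • (t₂ : g) +
        bb.repr a' 2 • (t₃ : g) := by
      have h := congrArg (fun v : t => (v : g)) hco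
      simpa using h
    have hkey : a = bb.repr a' 1 • ((t₁ : g) + (t₂ : g)) +
        (bb.repr a' 0 + bb.repr a' 1) • ((t₁ : g) + (t₃ : g)) := by
      rw [hcoe, hco2]
      match_scalars
      all_goals first
        | ring1
        | linear_combination (-(bb.repr a' 1)) * st12_two F
        | linear_combination bb.repr a' 1 * st12_two F
    rw [hkey]
    exact Submodule.add_mem _
      (Submodule.smul_mem _ _ (Submodule.subset_span (Set.mem_insert _ _)))
      (Submodule.smul_mem _ _ (Submodule.subset_span (Set.mem_insert_of_mem _ rfl)))
  -- brackets of two root vectors for the same root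
  have crux2 : ∀ (ξ : Module.Dual F t), ξ ∈ rootSet t → ∀ x' y' : g, x' ∈ rootSpace t ξ →
      y' ∈ rootSpace t ξ → ⁅x', y'⁆ ∈
      Submodule.span F ({(t₁ : g) + (t₂ : g), (t₁ : g) + (t₃ : g)} : Set g) ⊔ n := by
    intro ξ hξ x' y' hx' hy'
    have hxy' : x' + y' ∈ rootSpace t ξ := Submodule.add_mem _ hx' hy'
    have d1 := hpx_mem ξ x' hx'
    have d2 := hpx_mem ξ y' hy'
    have d3 := hpx_mem ξ (x' + y') hxy'
    rw [hdecomp] at d1 d2 d3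
    obtain ⟨sa, hsa, na, hna, hea⟩ := Submodule.mem_sup.mp d1
    obtain ⟨sb, hsb, nb, hnb, heb⟩ := Submodule.mem_sup.mp d2
    obtain ⟨sc, hsc, nc, hnc, hec⟩ := Submodule.mem_sup.mp d3
    have hsa' : sa ∈ t := (LieSubalgebra.mem_toSubmodule (L' := t)).mp hsa
    have hsb' : sb ∈ t := (LieSubalgebra.mem_toSubmodule (L' := t)).mp hsb
    have hsc' : sc ∈ t := (LieSubalgebra.mem_toSubmodule (L' := t)).mp hsc
    have hka := key ξ hξ x' hx' sa na hsa' hna hea.symm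
    have hkb := key ξ hξ y' hy' sb nb hsb' hnb heb.symm
    have hkc := key ξ hξ (x' + y') hxy' sc nc hsc' hnc hec.symm
    have hxysum : p (x' + y') + (p x' + p y') = ⁅x', y'⁆ := by
      rw [hp.add_pow]
      have h' : p x' + p y' + ⁅x', y'⁆ + (p x' + p y') =
          ⁅x', y'⁆ + ((p x' + p x') + (p y' + p y')) := by abel
      rw [h', h2g, h2g, add_zero, add_zero]
    have hbr : ⁅x', y'⁆ = (sc + sa + sb) + (nc + na + nb) := by
      rw [← hxysum, ← hea, ← heb, ← hec]
      abel
    rw [hbr]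
    refine Submodule.mem_sup.mpr ⟨sc + sa + sb, ?_, nc + na + nb, ?_, rfl⟩
    · exact Submodule.add_mem _ (Submodule.add_mem _ (hSsub sc hsc' hkc)
        (hSsub sa hsa' hka)) (hSsub sb hsb' hkb)
    · exact Submodule.add_mem _ (Submodule.add_mem _ hnc hna) hnb
  -- eigen-splitting machinery
  have hsplit : ∀ (s : t), p (s : g) = (s : g) → ∀ v : g,
      ∃ v0 v1 : g, v = v0 + v1 ∧ ⁅(s : g), v0⁆ = (0 : F) • v0 ∧ ⁅(s : g), v1⁆ = (1 : F) • v1 ∧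
      (∀ (s' : t) (c : F), ⁅(s' : g), v⁆ = c • v →
        ⁅(s' : g), v0⁆ = c • v0 ∧ ⁅(s' : g), v1⁆ = c • v1) := by
    intro s hs v
    have hidem : ⁅(s : g), ⁅(s : g), v⁆⁆ = ⁅(s : g), v⁆ := by
      rw [← hp.ad_pow, hs]
    refine ⟨v + ⁅(s : g), v⁆, ⁅(s : g), v⁆, ?_, ?_, ?_, ?_⟩
    · rw [add_assoc, h2g, add_zero]
    · rw [zero_smul, lie_add, hidem, h2g]
    · rw [one_smul]
      exact hidem
    · intro s' c hc
      have h1' : ⁅(s' : g), ⁅(s : g), v⁆⁆ = c • ⁅(s : g), v⁆ := by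
        rw [leibniz_lie, habel s' s, zero_lie, zero_add, hc, lie_smul]
      exact ⟨by rw [lie_add, hc, h1', smul_add], h1'⟩
  have heig : ∀ (v : g) (c1 c2 c3 : F), ⁅(t₁ : g), v⁆ = c1 • v → ⁅(t₂ : g), v⁆ = c2 • v →
      ⁅(t₃ : g), v⁆ = c3 • v → v ∈ rootSpace t (c1 • α + c2 • β + c3 • γ) := by
    intro v c1 c2 c3 e1 e2 e3
    refine st12_mem_rootSpace.mpr fun a => ?_
    have ha := hmemspan a
    induction ha using Submodule.span_induction with
    | mem c hc =>
      simp only [Set.mem_insert_iff, Set.mem_singleton_iff] at hc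
      rcases hc with rfl | rfl | rfl
      · rw [e1]
        simp only [LinearMap.add_apply, LinearMap.smul_apply, smul_eq_mul,
          hα.1, hβ.1, hγ.1]
        congr 1
        ring
      · rw [e2]
        simp only [LinearMap.add_apply, LinearMap.smul_apply, smul_eq_mul,
          hα.2.1, hβ.2.1, hγ.2.1]
        congr 1
        ring
      · rw [e3]
        simp only [LinearMap.add_apply, LinearMap.smul_apply, smul_eq_mul,
          hα.2.2, hβ.2.2, hγ.2.2]
        congr 1
        ring
    | zero => simp
    | add w w' _ _ ihw ihw' =>
      rw [show ((w + w' : t) : g) = (w : g) + (w' : g) from rfl, add_lie, ihw, ihw',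
        map_add, add_smul]
    | smul c w _ ih =>
      rw [show ((c • w : t) : g) = c • (w : g) from rfl, smul_lie, ih, map_smul,
        smul_eq_mul, mul_smul]
  -- nonvanishing of the seven roots
  have hne : ∀ (μ : Module.Dual F t) (a : t), μ a = 1 → μ ≠ 0 := by
    intro μ a hμ h
    rw [h] at hμ
    simp only [LinearMap.zero_apply] at hμ
    exact zero_ne_one hμ
  intro x y hy
  set S := Submodule.span F ({(t₁ : g) + (t₂ : g), (t₁ : g) + (t₃ : g)} : Set g) with hSdef
  set M := S ⊔ n ⊔ (⨆ ξ ∈ rootSet t, rootSpace t ξ) with hMdef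
  have hSM : S ≤ M := le_trans le_sup_left le_sup_left
  have hnM : n ≤ M := le_trans le_sup_right le_sup_left
  have hRM : ∀ ξ, ξ ∈ rootSet t → rootSpace t ξ ≤ M := fun ξ hξ =>
    le_trans (le_iSup₂ (f := fun ζ (_ : ζ ∈ rootSet t) => rootSpace t ζ) ξ hξ) le_sup_right
  have hrootM : ∀ ζ : Module.Dual F t, ζ ≠ 0 → rootSpace t ζ ≤ M := by
    intro ζ hζ
    by_cases hb : rootSpace t ζ = ⊥
    · rw [hb]
      exact bot_le
    · exact hRM ζ ⟨hζ, hb⟩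
  have hcase : ∀ x' : g, (x' ∈ rootSpace t 0 ∨ ∃ ξ ∈ rootSet t, x' ∈ rootSpace t ξ) →
      ∀ y' : g, (y' ∈ t.toSubmodule ∨ y' ∈ n ∨ ∃ ζ ∈ rootSet t, y' ∈ rootSpace t ζ) →
      ⁅x', y'⁆ ∈ M := by
    intro x' hx' y' hy'
    rcases hx' with hx' | ⟨ξ, hξ, hx'⟩
    · rcases hy' with hy' | hy' | ⟨ζ, hζ, hy'⟩
      · rw [hswap, hH0 y' hy' x' hx']
        exact M.zero_mem
      · exact hnM (hstd x' hx' y' hy')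
      · have h' := st12_brkt t 0 ζ hx' hy'
        rw [zero_add] at h'
        exact hRM ζ hζ h'
    · rcases hy' with hy' | hy' | ⟨ζ, hζ, hy'⟩
      · rw [hswap]
        have h' := hx' ⟨y', hy'⟩
        rw [show ((⟨y', hy'⟩ : t) : g) = y' from rfl] at h'
        rw [h']
        exact hRM ξ hξ (Submodule.smul_mem _ _ hx')
      · have hyH : y' ∈ rootSpace t 0 := ((hn y').mp hy').1
        have h' := st12_brkt t ξ 0 hx' hyH
        rw [add_zero] at h'
        exact hRM ξ hξ h'
      · by_cases hξζ : ξ = ζ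
        · subst hξζ
          exact (sup_le hSM hnM : S ⊔ n ≤ M) (crux2 ξ hξ x' y' hx' hy')
        · have hsum := st12_brkt t ξ ζ hx' hy'
          have hne0 : ξ + ζ ≠ 0 := by
            intro h0
            apply hξζ
            have h' : ξ = ξ + (ζ + ζ) := by rw [hdual2, add_zero]
            rw [h', ← add_assoc, h0, zero_add]
          exact hrootM _ hne0 hsum
  have hpiece : ∀ (y' : g),
      (y' ∈ t.toSubmodule ∨ y' ∈ n ∨ ∃ ζ ∈ rootSet t, y' ∈ rootSpace t ζ) →
      ∀ (v : g) (μ : Module.Dual F t), μ ≠ 0 → v ∈ rootSpace t μ → ⁅v, y'⁆ ∈ M := by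
    intro y' hy' v μ hμ hv
    by_cases hb : rootSpace t μ = ⊥
    · rw [hb, Submodule.mem_bot] at hv
      rw [hv, zero_lie]
      exact M.zero_mem
    · exact hcase v (Or.inr ⟨μ, ⟨hμ, hb⟩, hv⟩) y' hy'
  have hxany : ∀ y' : g,
      (y' ∈ t.toSubmodule ∨ y' ∈ n ∨ ∃ ζ ∈ rootSet t, y' ∈ rootSpace t ζ) →
      ⁅x, y'⁆ ∈ M := by
    intro y' hy'
    obtain ⟨a0, a1, hxa, ha0, ha1, hpa⟩ := hsplit t₁ htor1 x
    obtain ⟨b0, b1, ha0s, hb0, hb1, hpb⟩ := hsplit t₂ htor2 a0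
    obtain ⟨b2, b3, ha1s, hb2, hb3, hpb'⟩ := hsplit t₂ htor2 a1
    obtain ⟨c0, c1, hb0s, hc0, hc1, hpc0⟩ := hsplit t₃ htor3 b0
    obtain ⟨c2, c3, hb1s, hc2, hc3, hpc1⟩ := hsplit t₃ htor3 b1
    obtain ⟨c4, c5, hb2s, hc4, hc5, hpc2⟩ := hsplit t₃ htor3 b2
    obtain ⟨c6, c7, hb3s, hc6, hc7, hpc3⟩ := hsplit t₃ htor3 b3
    -- eigenvalue data
    have hb0t1 : ⁅(t₁ : g), b0⁆ = (0 : F) • b0 := (hpb t₁ 0 ha0).1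
    have hb1t1 : ⁅(t₁ : g), b1⁆ = (0 : F) • b1 := (hpb t₁ 0 ha0).2
    have hb2t1 : ⁅(t₁ : g), b2⁆ = (1 : F) • b2 := (hpb' t₁ 1 ha1).1
    have hb3t1 : ⁅(t₁ : g), b3⁆ = (1 : F) • b3 := (hpb' t₁ 1 ha1).2
    have hm0 : c0 ∈ rootSpace t ((0:F) • α + (0:F) • β + (0:F) • γ) :=
      heig c0 0 0 0 (hpc0 t₁ 0 hb0t1).1 (hpc0 t₂ 0 hb0).1 hc0
    have hm1 : c1 ∈ rootSpace t ((0:F) • α + (0:F) • β + (1:F) • γ) :=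
      heig c1 0 0 1 (hpc0 t₁ 0 hb0t1).2 (hpc0 t₂ 0 hb0).2 hc1
    have hm2 : c2 ∈ rootSpace t ((0:F) • α + (1:F) • β + (0:F) • γ) :=
      heig c2 0 1 0 (hpc1 t₁ 0 hb1t1).1 (hpc1 t₂ 1 hb1).1 hc2
    have hm3 : c3 ∈ rootSpace t ((0:F) • α + (1:F) • β + (1:F) • γ) :=
      heig c3 0 1 1 (hpc1 t₁ 0 hb1t1).2 (hpc1 t₂ 1 hb1).2 hc3
    have hm4 : c4 ∈ rootSpace t ((1:F) • α + (0:F) • β + (0:F) • γ) :=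
      heig c4 1 0 0 (hpc2 t₁ 1 hb2t1).1 (hpc2 t₂ 0 hb2).1 hc4
    have hm5 : c5 ∈ rootSpace t ((1:F) • α + (0:F) • β + (1:F) • γ) :=
      heig c5 1 0 1 (hpc2 t₁ 1 hb2t1).2 (hpc2 t₂ 0 hb2).2 hc5
    have hm6 : c6 ∈ rootSpace t ((1:F) • α + (1:F) • β + (0:F) • γ) :=
      heig c6 1 1 0 (hpc3 t₁ 1 hb3t1).1 (hpc3 t₂ 1 hb3).1 hc6
    have hm7 : c7 ∈ rootSpace t ((1:F) • α + (1:F) • β + (1:F) • γ) :=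
      heig c7 1 1 1 (hpc3 t₁ 1 hb3t1).2 (hpc3 t₂ 1 hb3).2 hc7
    rw [show ((0:F) • α + (0:F) • β + (0:F) • γ) = 0 from by simp] at hm0
    rw [show ((0:F) • α + (0:F) • β + (1:F) • γ) = γ from by simp] at hm1
    rw [show ((0:F) • α + (1:F) • β + (0:F) • γ) = β from by simp] at hm2
    rw [show ((0:F) • α + (1:F) • β + (1:F) • γ) = β + γ from by simp] at hm3
    rw [show ((1:F) • α + (0:F) • β + (0:F) • γ) = α from by simp] at hm4
    rw [show ((1:F) • α + (0:F) • β + (1:F) • γ) = α + γ from by simp] at hm5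
    rw [show ((1:F) • α + (1:F) • β + (0:F) • γ) = α + β from by simp] at hm6
    rw [show ((1:F) • α + (1:F) • β + (1:F) • γ) = α + β + γ from by simp] at hm7
    have hx8 : x = c0 + c1 + c2 + c3 + c4 + c5 + c6 + c7 := by
      rw [hxa, ha0s, ha1s, hb0s, hb1s, hb2s, hb3s]
      abel
    rw [hx8, add_lie, add_lie, add_lie, add_lie, add_lie, add_lie, add_lie]
    refine M.add_mem (M.add_mem (M.add_mem (M.add_mem (M.add_mem (M.add_mem
      (M.add_mem ?_ ?_) ?_) ?_) ?_) ?_) ?_) ?_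
    · exact hcase c0 (Or.inl hm0) y' hy'
    · exact hpiece y' hy' c1 γ (hne γ t₃ hγ.2.2) hm1
    · exact hpiece y' hy' c2 β (hne β t₂ hβ.2.1) hm2
    · exact hpiece y' hy' c3 (β + γ) (hne (β + γ) t₂ (by
        simp only [LinearMap.add_apply]; rw [hβ.2.1, hγ.2.1, add_zero])) hm3
    · exact hpiece y' hy' c4 α (hne α t₁ hα.1) hm4
    · exact hpiece y' hy' c5 (α + γ) (hne (α + γ) t₁ (by
        simp only [LinearMap.add_apply]; rw [hα.1, hγ.1, add_zero])) hm5
    · exact hpiece y' hy' c6 (α + β) (hne (α + β) t₁ (by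
        simp only [LinearMap.add_apply]; rw [hα.1, hβ.1, add_zero])) hm6
    · exact hpiece y' hy' c7 (α + β + γ) (hne (α + β + γ) t₁ (by
        simp only [LinearMap.add_apply]; rw [hα.1, hβ.1, hγ.1, add_zero, add_zero])) hm7
  -- finally, decompose y
  rcases Submodule.mem_sup.mp hy with ⟨y1, hy1, y2, hy2, rfl⟩
  rcases Submodule.mem_sup.mp hy1 with ⟨ys, hys, yn, hyn, rfl⟩
  rw [lie_add, lie_add]
  refine M.add_mem (M.add_mem ?_ ?_) ?_
  · have hSt : S ≤ t.toSubmodule := by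
      rw [hSdef, Submodule.span_le]
      rintro v (rfl | rfl)
      · exact add_mem t₁.2 t₂.2
      · exact add_mem t₁.2 t₃.2
    exact hxany ys (Or.inl (hSt hys))
  · exact hxany yn (Or.inr (Or.inl hyn))
  · refine Submodule.iSup_induction _ (motive := fun v => ⁅x, v⁆ ∈ M) hy2 ?_ ?_ ?_
    · intro ζ v hv
      by_cases hζ : ζ ∈ rootSet t
      · rw [iSup_pos hζ] at hv
        exact hxany v (Or.inr (Or.inr ⟨ζ, hζ, hv⟩))
      · rw [iSup_neg hζ] at hv
        rw [(Submodule.mem_bot F).mp hv, lie_zero]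
        exact M.zero_mem
    · show ⁅x, (0 : g)⁆ ∈ M
      rw [lie_zero]
      exact M.zero_mem
    · intro v w hv hw
      show ⁅x, v + w⁆ ∈ M
      rw [lie_add]
      exact M.add_mem hv hw
end
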